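/- arXiv:1905.12393 — 7 statements merged into one kernel-verified Lean document; each statement's English description precedes it below -/
import Mathlib

section
/- Consider the D1Q2 scheme: given (f⁻_j^n, f⁺_j^n)_{j∈ℤ}, define f^{±,n+1/2}_j = (1−s) f^±_j^n + s h^±(u_j^n) where u_j^n = f⁺_j^n + f⁻_j^n, and then f⁺_j^{n+1} = f^{+,n+1/2}_{j−1}, f⁻_j^{n+1} = f^{−,n+1/2}_{j+1}. Assume s ∈ (0,1], λ ≥ M = max_{[α,β]}|φ'|, initial data u_j^0 ∈ [α,β] and f^±_j^0 = h^±(u_j^0). Then for all n and j: u_j^n ∈ [α,β] and f^±_j^n ∈ [h^±(α), h^±(β)]. -/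
/-- Equilibrium distribution function for velocity `+λ`. -/
noncomputable def hp (lam : ℝ) (flux : ℝ → ℝ) (ξ : ℝ) : ℝ := (lam * ξ + flux ξ) / (2 * lam)

/-- Equilibrium distribution function for velocity `-λ`. -/
noncomputable def hm (lam : ℝ) (flux : ℝ → ℝ) (ξ : ℝ) : ℝ := (lam * ξ - flux ξ) / (2 * lam)

lemma hp_mono (flux : ℝ → ℝ) (hflux : ContDiff ℝ 1 flux) (α β M lam : ℝ)
    (hlampos : 0 < lam) (hM : ∀ ξ ∈ Set.Icc α β, |deriv flux ξ| ≤ M) (hlam : M ≤ lam) :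
    MonotoneOn (hp lam flux) (Set.Icc α β) := by
  have hd : Differentiable ℝ flux := hflux.differentiable one_ne_zero
  have hmono : MonotoneOn (fun x => lam * x + flux x) (Set.Icc α β) := by
    apply monotoneOn_of_deriv_nonneg (convex_Icc α β)
    · exact ((continuous_const.mul continuous_id).add hd.continuous).continuousOn
    · intro x _
      exact (((differentiable_id.const_mul lam).add hd) x).differentiableWithinAt
    · intro x hx
      have hx' : x ∈ Set.Icc α β := interior_subset hx
      have h1 : HasDerivAt (fun x => lam * x + flux x) (lam * 1 + deriv flux x) x :=
        ((hasDerivAt_id x).const_mul lam).add (hd x).hasDerivAt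
      rw [h1.deriv]
      have := abs_le.mp (hM x hx')
      linarith
  intro a ha b hb hab
  unfold hp
  exact div_le_div_of_nonneg_right (hmono ha hb hab) (by linarith)

lemma hm_mono (flux : ℝ → ℝ) (hflux : ContDiff ℝ 1 flux) (α β M lam : ℝ)
    (hlampos : 0 < lam) (hM : ∀ ξ ∈ Set.Icc α β, |deriv flux ξ| ≤ M) (hlam : M ≤ lam) :
    MonotoneOn (hm lam flux) (Set.Icc α β) := by
  have hd : Differentiable ℝ flux := hflux.differentiable one_ne_zero
  have hmono : MonotoneOn (fun x => lam * x - flux x) (Set.Icc α β) := by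
    apply monotoneOn_of_deriv_nonneg (convex_Icc α β)
    · exact ((continuous_const.mul continuous_id).sub hd.continuous).continuousOn
    · intro x _
      exact (((differentiable_id.const_mul lam).sub hd) x).differentiableWithinAt
    · intro x hx
      have hx' : x ∈ Set.Icc α β := interior_subset hx
      have h1 : HasDerivAt (fun x => lam * x - flux x) (lam * 1 - deriv flux x) x :=
        ((hasDerivAt_id x).const_mul lam).sub (hd x).hasDerivAt
      rw [h1.deriv]
      have := abs_le.mp (hM x hx')
      linarith
  intro a ha b hb hab
  unfold hm
  exact div_le_div_of_nonneg_right (hmono ha hb hab) (by linarith)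

lemma convex_comb {A B a b s : ℝ} (hs0 : 0 < s) (hs1 : s ≤ 1)
    (ha : a ∈ Set.Icc A B) (hb : b ∈ Set.Icc A B) :
    (1 - s) * a + s * b ∈ Set.Icc A B := by
  constructor
  · nlinarith [ha.1, hb.1]
  · nlinarith [ha.2, hb.2]

/-- Maximum principle for the D1Q2 scheme. -/
theorem stmt3 (flux : ℝ → ℝ) (hflux : ContDiff ℝ 1 flux)
    (α β M lam s : ℝ) (hαβ : α ≤ β) (hlampos : 0 < lam)
    (hs : s ∈ Set.Ioc (0 : ℝ) 1)
    (hM : ∀ ξ ∈ Set.Icc α β, |deriv flux ξ| ≤ M) (hlam : M ≤ lam)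
    (fp fm u : ℕ → ℤ → ℝ)
    (hu : ∀ n j, u n j = fp n j + fm n j)
    (hrecp : ∀ n j, fp (n + 1) j = (1 - s) * fp n (j - 1) + s * hp lam flux (u n (j - 1)))
    (hrecm : ∀ n j, fm (n + 1) j = (1 - s) * fm n (j + 1) + s * hm lam flux (u n (j + 1)))
    (hinit : ∀ j, u 0 j ∈ Set.Icc α β)
    (hinitp : ∀ j, fp 0 j = hp lam flux (u 0 j))
    (hinitm : ∀ j, fm 0 j = hm lam flux (u 0 j)) :
    ∀ n j, u n j ∈ Set.Icc α β ∧
      fp n j ∈ Set.Icc (hp lam flux α) (hp lam flux β) ∧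
      fm n j ∈ Set.Icc (hm lam flux α) (hm lam flux β) := by
  have hpm := hp_mono flux hflux α β M lam hlampos hM hlam
  have hmm := hm_mono flux hflux α β M lam hlampos hM hlam
  have hαm : α ∈ Set.Icc α β := ⟨le_rfl, hαβ⟩
  have hβm : β ∈ Set.Icc α β := ⟨hαβ, le_rfl⟩
  have hsum : ∀ x, hp lam flux x + hm lam flux x = x := by
    intro x; unfold hp hm; field_simp; ring
  have hpIcc : ∀ x ∈ Set.Icc α β, hp lam flux x ∈ Set.Icc (hp lam flux α) (hp lam flux β) :=
    fun x hx => ⟨hpm hαm hx hx.1, hpm hx hβm hx.2⟩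
  have hmIcc : ∀ x ∈ Set.Icc α β, hm lam flux x ∈ Set.Icc (hm lam flux α) (hm lam flux β) :=
    fun x hx => ⟨hmm hαm hx hx.1, hmm hx hβm hx.2⟩
  intro n
  induction n with
  | zero =>
    intro j
    refine ⟨hinit j, ?_, ?_⟩
    · rw [hinitp j]; exact hpIcc _ (hinit j)
    · rw [hinitm j]; exact hmIcc _ (hinit j)
  | succ n ih =>
    intro j
    have hfp : fp (n + 1) j ∈ Set.Icc (hp lam flux α) (hp lam flux β) := by
      rw [hrecp n j]
      exact convex_comb hs.1 hs.2 (ih (j - 1)).2.1 (hpIcc _ (ih (j - 1)).1)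
    have hfm : fm (n + 1) j ∈ Set.Icc (hm lam flux α) (hm lam flux β) := by
      rw [hrecm n j]
      exact convex_comb hs.1 hs.2 (ih (j + 1)).2.2 (hmIcc _ (ih (j + 1)).1)
    refine ⟨?_, hfp, hfm⟩
    rw [hu (n + 1) j]
    constructor
    · have := hsum α; nlinarith [hfp.1, hfm.1]
    · have := hsum β; nlinarith [hfp.2, hfm.2]
end

section
/- Under the D1Q2 scheme with s ∈ (0,1], λ ≥ M, initial conserved moment (u_j^0)_{j∈ℤ} ⊂ [α,β] with finite sequential total variation, and f^±_j^0 = h^±(u_j^0), one has for all n ∈ ℕ: TV(f⁺^n) + TV(f⁻^n) ≤ TV(u^0), TV(u^n) ≤ TV(u^0), and TV(v^n) ≤ λ TV(u^0), where u_j^n = f⁺_j^n + f⁻_j^n and v_j^n = λ(f⁺_j^n − f⁻_j^n). -/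
/-- Sequential total variation of a sequence indexed by `ℤ`. -/
noncomputable def tvSeq (w : ℤ → ℝ) : ENNReal := ∑' j : ℤ, ENNReal.ofReal |w (j + 1) - w j|

lemma tvSeq_shift (w : ℤ → ℝ) (c : ℤ) : tvSeq (fun j => w (j + c)) = tvSeq w := by
  unfold tvSeq
  rw [← (Equiv.addRight c).tsum_eq (fun j => ENNReal.ofReal |w (j + 1) - w j|)]
  refine tsum_congr fun j => ?_
  simp only [Equiv.coe_addRight]
  congr 2
  ring_nf

lemma tv_comb (a b : ℝ) (w w' : ℤ → ℝ) :
    tvSeq (fun j => a * w j + b * w' j) ≤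
      ENNReal.ofReal |a| * tvSeq w + ENNReal.ofReal |b| * tvSeq w' := by
  unfold tvSeq
  rw [← ENNReal.tsum_mul_left, ← ENNReal.tsum_mul_left, ← ENNReal.tsum_add]
  refine ENNReal.tsum_le_tsum fun j => ?_
  rw [← ENNReal.ofReal_mul (abs_nonneg a), ← ENNReal.ofReal_mul (abs_nonneg b),
    ← ENNReal.ofReal_add (by positivity) (by positivity)]
  apply ENNReal.ofReal_le_ofReal
  calc |(a * w (j + 1) + b * w' (j + 1)) - (a * w j + b * w' j)|
      = |a * (w (j + 1) - w j) + b * (w' (j + 1) - w' j)| := by congr 1; ring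
    _ ≤ |a * (w (j + 1) - w j)| + |b * (w' (j + 1) - w' j)| := abs_add_le _ _
    _ = |a| * |w (j + 1) - w j| + |b| * |w' (j + 1) - w' j| := by rw [abs_mul, abs_mul]

lemma key_id (flux : ℝ → ℝ) (hflux : ContDiff ℝ 1 flux) (α β M lam : ℝ)
    (hlampos : 0 < lam) (hM : ∀ ξ ∈ Set.Icc α β, |deriv flux ξ| ≤ M) (hlam : M ≤ lam)
    {a b : ℝ} (ha : a ∈ Set.Icc α β) (hb : b ∈ Set.Icc α β) (hab : a ≤ b) :
    0 ≤ hp lam flux b - hp lam flux a ∧ 0 ≤ hm lam flux b - hm lam flux a := by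
  have hlip : |flux b - flux a| ≤ M * (b - a) := by
    have := Convex.norm_image_sub_le_of_norm_deriv_le (f := flux)
      (fun x _ => (hflux.differentiable one_ne_zero) x)
      (fun x hx => hM x hx) (convex_Icc α β) ha hb
    simpa [Real.norm_eq_abs, abs_of_nonneg (sub_nonneg.2 hab)] using this
  have h1 : |flux b - flux a| ≤ lam * (b - a) := hlip.trans (by nlinarith)
  have h2 := abs_le.1 h1
  have h2l : (0:ℝ) < 2 * lam := by positivity
  constructor
  · have e : hp lam flux b - hp lam flux a
        = (lam * (b - a) + (flux b - flux a)) / (2 * lam) := by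
      unfold hp; field_simp; ring
    rw [e]
    apply div_nonneg _ h2l.le
    linarith [h2.1]
  · have e : hm lam flux b - hm lam flux a
        = (lam * (b - a) - (flux b - flux a)) / (2 * lam) := by
      unfold hm; field_simp; ring
    rw [e]
    apply div_nonneg _ h2l.le
    linarith [h2.2]

lemma key_abs (flux : ℝ → ℝ) (hflux : ContDiff ℝ 1 flux) (α β M lam : ℝ)
    (hlampos : 0 < lam) (hM : ∀ ξ ∈ Set.Icc α β, |deriv flux ξ| ≤ M) (hlam : M ≤ lam)
    {a b : ℝ} (ha : a ∈ Set.Icc α β) (hb : b ∈ Set.Icc α β) :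
    |hp lam flux b - hp lam flux a| + |hm lam flux b - hm lam flux a| = |b - a| := by
  have main : ∀ x y : ℝ, x ∈ Set.Icc α β → y ∈ Set.Icc α β → x ≤ y →
      |hp lam flux y - hp lam flux x| + |hm lam flux y - hm lam flux x| = |y - x| := by
    intro x y hx hy hxy
    obtain ⟨h1, h2⟩ := key_id flux hflux α β M lam hlampos hM hlam hx hy hxy
    rw [abs_of_nonneg h1, abs_of_nonneg h2, abs_of_nonneg (by linarith : (0:ℝ) ≤ y - x)]
    have h2l : (2:ℝ) * lam ≠ 0 := by positivity
    unfold hp hm; field_simp; ring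
  rcases le_total a b with h | h
  · exact main a b ha hb h
  · rw [abs_sub_comm (hp lam flux b), abs_sub_comm (hm lam flux b), abs_sub_comm b a]
    exact main b a hb ha h

/-- Spatial total variation estimates for the D1Q2 scheme. -/
theorem stmt5 (flux : ℝ → ℝ) (hflux : ContDiff ℝ 1 flux)
    (α β M lam s : ℝ) (hαβ : α ≤ β) (hlampos : 0 < lam)
    (hs : s ∈ Set.Ioc (0 : ℝ) 1)
    (hM : ∀ ξ ∈ Set.Icc α β, |deriv flux ξ| ≤ M) (hlam : M ≤ lam)
    (fp fm u v : ℕ → ℤ → ℝ)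
    (hu : ∀ n j, u n j = fp n j + fm n j)
    (hv : ∀ n j, v n j = lam * (fp n j - fm n j))
    (hrecp : ∀ n j, fp (n + 1) j = (1 - s) * fp n (j - 1) + s * hp lam flux (u n (j - 1)))
    (hrecm : ∀ n j, fm (n + 1) j = (1 - s) * fm n (j + 1) + s * hm lam flux (u n (j + 1)))
    (hinit : ∀ j, u 0 j ∈ Set.Icc α β)
    (hTV0 : tvSeq (u 0) < ⊤)
    (hinitp : ∀ j, fp 0 j = hp lam flux (u 0 j))
    (hinitm : ∀ j, fm 0 j = hm lam flux (u 0 j)) :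
    ∀ n : ℕ,
      tvSeq (fp n) + tvSeq (fm n) ≤ tvSeq (u 0) ∧
      tvSeq (u n) ≤ tvSeq (u 0) ∧
      tvSeq (v n) ≤ ENNReal.ofReal lam * tvSeq (u 0) := by
  obtain ⟨hs0, hs1⟩ := hs
  have hαmem : α ∈ Set.Icc α β := Set.left_mem_Icc.2 hαβ
  have hβmem : β ∈ Set.Icc α β := Set.right_mem_Icc.2 hαβ
  have hsum : ∀ x, hp lam flux x + hm lam flux x = x := fun x => by
    have h2l : (2:ℝ) * lam ≠ 0 := by positivity
    unfold hp hm; field_simp; ring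
  have hpmono : ∀ {a b : ℝ}, a ∈ Set.Icc α β → b ∈ Set.Icc α β → a ≤ b →
      hp lam flux a ≤ hp lam flux b := fun ha hb hab =>
    sub_nonneg.1 (key_id flux hflux α β M lam hlampos hM hlam ha hb hab).1
  have hmmono : ∀ {a b : ℝ}, a ∈ Set.Icc α β → b ∈ Set.Icc α β → a ≤ b →
      hm lam flux a ≤ hm lam flux b := fun ha hb hab =>
    sub_nonneg.1 (key_id flux hflux α β M lam hlampos hM hlam ha hb hab).2
  -- invariant on ranges
  have inv : ∀ n j, fp n j ∈ Set.Icc (hp lam flux α) (hp lam flux β) ∧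
      fm n j ∈ Set.Icc (hm lam flux α) (hm lam flux β) := by
    intro n
    induction n with
    | zero =>
      intro j
      have hu0 := hinit j
      refine ⟨⟨?_, ?_⟩, ⟨?_, ?_⟩⟩
      · rw [hinitp j]; exact hpmono hαmem hu0 hu0.1
      · rw [hinitp j]; exact hpmono hu0 hβmem hu0.2
      · rw [hinitm j]; exact hmmono hαmem hu0 hu0.1
      · rw [hinitm j]; exact hmmono hu0 hβmem hu0.2
    | succ n ih =>
      have uinv : ∀ j, u n j ∈ Set.Icc α β := by
        intro j
        obtain ⟨⟨h1, h2⟩, h3, h4⟩ := ih j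
        rw [hu]
        constructor
        · calc α = hp lam flux α + hm lam flux α := (hsum α).symm
            _ ≤ _ := add_le_add h1 h3
        · calc fp n j + fm n j ≤ hp lam flux β + hm lam flux β := add_le_add h2 h4
            _ = β := hsum β
      intro j
      obtain ⟨⟨h1, h2⟩, _, _⟩ := ih (j - 1)
      obtain ⟨_, h3, h4⟩ := ih (j + 1)
      have hum := uinv (j - 1)
      have hup := uinv (j + 1)
      have e1 : hp lam flux α ≤ hp lam flux (u n (j - 1)) := hpmono hαmem hum hum.1
      have e2 : hp lam flux (u n (j - 1)) ≤ hp lam flux β := hpmono hum hβmem hum.2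
      have e3 : hm lam flux α ≤ hm lam flux (u n (j + 1)) := hmmono hαmem hup hup.1
      have e4 : hm lam flux (u n (j + 1)) ≤ hm lam flux β := hmmono hup hβmem hup.2
      rw [hrecp, hrecm]
      refine ⟨⟨?_, ?_⟩, ⟨?_, ?_⟩⟩ <;> nlinarith
  have uinv : ∀ n j, u n j ∈ Set.Icc α β := by
    intro n j
    obtain ⟨⟨h1, h2⟩, h3, h4⟩ := inv n j
    rw [hu]
    constructor
    · calc α = hp lam flux α + hm lam flux α := (hsum α).symm
        _ ≤ _ := add_le_add h1 h3
    · calc fp n j + fm n j ≤ hp lam flux β + hm lam flux β := add_le_add h2 h4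
        _ = β := hsum β
  -- TV lemmas
  have tvu_le : ∀ n, tvSeq (u n) ≤ tvSeq (fp n) + tvSeq (fm n) := by
    intro n
    have e : u n = fun j => (1:ℝ) * fp n j + (1:ℝ) * fm n j := funext fun j => by
      rw [hu]; ring
    rw [e]
    simpa using tv_comb 1 1 (fp n) (fm n)
  have tvsplit : ∀ n, tvSeq (fun j => hp lam flux (u n j)) +
      tvSeq (fun j => hm lam flux (u n j)) = tvSeq (u n) := by
    intro n
    unfold tvSeq
    rw [← ENNReal.tsum_add]
    refine tsum_congr fun j => ?_
    rw [← ENNReal.ofReal_add (abs_nonneg _) (abs_nonneg _)]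
    congr 1
    exact key_abs flux hflux α β M lam hlampos hM hlam (uinv n j) (uinv n (j + 1))
  have S : ∀ n, tvSeq (fp n) + tvSeq (fm n) ≤ tvSeq (u 0) := by
    intro n
    induction n with
    | zero =>
      have e1 : fp 0 = fun j => hp lam flux (u 0 j) := funext hinitp
      have e2 : fm 0 = fun j => hm lam flux (u 0 j) := funext hinitm
      rw [e1, e2, tvsplit 0]
    | succ n ih =>
      have b1 : tvSeq (fp (n + 1)) ≤ ENNReal.ofReal (1 - s) * tvSeq (fp n) +
          ENNReal.ofReal s * tvSeq (fun j => hp lam flux (u n j)) := by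
        have h1 : tvSeq (fp (n + 1)) =
            tvSeq (fun i => (1 - s) * fp n i + s * hp lam flux (u n i)) := by
          rw [← tvSeq_shift (fun i => (1 - s) * fp n i + s * hp lam flux (u n i)) (-1)]
          congr 1
          funext j
          rw [hrecp]
          simp [sub_eq_add_neg]
        rw [h1]
        have := tv_comb (1 - s) s (fp n) (fun j => hp lam flux (u n j))
        simpa [abs_of_nonneg (by linarith : (0:ℝ) ≤ 1 - s), abs_of_pos hs0] using this
      have b2 : tvSeq (fm (n + 1)) ≤ ENNReal.ofReal (1 - s) * tvSeq (fm n) +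
          ENNReal.ofReal s * tvSeq (fun j => hm lam flux (u n j)) := by
        have h1 : tvSeq (fm (n + 1)) =
            tvSeq (fun i => (1 - s) * fm n i + s * hm lam flux (u n i)) := by
          rw [← tvSeq_shift (fun i => (1 - s) * fm n i + s * hm lam flux (u n i)) 1]
          congr 1
          funext j
          rw [hrecm]
        rw [h1]
        have := tv_comb (1 - s) s (fm n) (fun j => hm lam flux (u n j))
        simpa [abs_of_nonneg (by linarith : (0:ℝ) ≤ 1 - s), abs_of_pos hs0] using this
      calc tvSeq (fp (n + 1)) + tvSeq (fm (n + 1))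
          ≤ (ENNReal.ofReal (1 - s) * tvSeq (fp n) +
              ENNReal.ofReal s * tvSeq (fun j => hp lam flux (u n j))) +
            (ENNReal.ofReal (1 - s) * tvSeq (fm n) +
              ENNReal.ofReal s * tvSeq (fun j => hm lam flux (u n j))) := add_le_add b1 b2
        _ = ENNReal.ofReal (1 - s) * (tvSeq (fp n) + tvSeq (fm n)) +
            ENNReal.ofReal s * (tvSeq (fun j => hp lam flux (u n j)) +
              tvSeq (fun j => hm lam flux (u n j))) := by ring
        _ = ENNReal.ofReal (1 - s) * (tvSeq (fp n) + tvSeq (fm n)) +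
            ENNReal.ofReal s * tvSeq (u n) := by rw [tvsplit n]
        _ ≤ ENNReal.ofReal (1 - s) * tvSeq (u 0) + ENNReal.ofReal s * tvSeq (u 0) :=
            add_le_add (mul_le_mul_right ih _)
              (mul_le_mul_right ((tvu_le n).trans ih) _)
        _ = (ENNReal.ofReal (1 - s) + ENNReal.ofReal s) * tvSeq (u 0) := (add_mul _ _ _).symm
        _ = tvSeq (u 0) := by
            rw [← ENNReal.ofReal_add (by linarith) hs0.le]
            norm_num
  intro n
  refine ⟨S n, (tvu_le n).trans (S n), ?_⟩
  have e : v n = fun j => lam * fp n j + (-lam) * fm n j := funext fun j => by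
    rw [hv]; ring
  rw [e]
  calc tvSeq (fun j => lam * fp n j + (-lam) * fm n j)
      ≤ ENNReal.ofReal |lam| * tvSeq (fp n) + ENNReal.ofReal |(-lam)| * tvSeq (fm n) :=
        tv_comb lam (-lam) (fp n) (fm n)
    _ = ENNReal.ofReal lam * (tvSeq (fp n) + tvSeq (fm n)) := by
        rw [abs_neg, abs_of_pos hlampos, mul_add]
    _ ≤ ENNReal.ofReal lam * tvSeq (u 0) := mul_le_mul_right (S n) _
end

section
/- Under the D1Q2 scheme with s ∈ (0,1], λ ≥ M, and equilibrium initial data with finite TV, the total variation in time is controlled: for all n ≥ 1, ∑_{j∈ℤ} (|f⁺_j^{n+1} − f⁺_j^n| + |f⁻_j^{n+1} − f⁻_j^n|) ≤ ∑_{j∈ℤ} (|f⁺_j^n − f⁺_j^{n−1}| + |f⁻_j^n − f⁻_j^{n−1}|), and moreover ∑_{j∈ℤ} (|f⁺_j^{n+1} − f⁺_j^n| + |f⁻_j^{n+1} − f⁻_j^n|) ≤ 2 TV(u^0). -/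
lemma shift_sub_tsum (f : ℤ → ENNReal) : ∑' j : ℤ, f (j - 1) = ∑' j : ℤ, f j :=
  (Equiv.subRight (1 : ℤ)).tsum_eq f

lemma shift_add_tsum (f : ℤ → ENNReal) : ∑' j : ℤ, f (j + 1) = ∑' j : ℤ, f j :=
  (Equiv.addRight (1 : ℤ)).tsum_eq f

lemma absId (lam d e : ℝ) (h : |e| ≤ lam * |d|) :
    |lam * d + e| + |lam * d - e| = 2 * lam * |d| := by
  rcases le_total 0 d with hd | hd
  · rw [abs_of_nonneg hd] at h ⊢
    obtain ⟨h1, h2⟩ := abs_le.mp h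
    rw [abs_of_nonneg (by linarith), abs_of_nonneg (by linarith)]; ring
  · rw [abs_of_nonpos hd] at h ⊢
    obtain ⟨h1, h2⟩ := abs_le.mp h
    rw [abs_of_nonpos (by linarith), abs_of_nonpos (by linarith)]; ring

lemma lipflux (flux : ℝ → ℝ) (hflux : ContDiff ℝ 1 flux) (α β M lam : ℝ)
    (hM : ∀ ξ ∈ Set.Icc α β, |deriv flux ξ| ≤ M) (hlam : M ≤ lam) :
    ∀ a ∈ Set.Icc α β, ∀ b ∈ Set.Icc α β, |flux a - flux b| ≤ lam * |a - b| := by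
  have hdiff : Differentiable ℝ flux := hflux.differentiable one_ne_zero
  have key : ∀ a b, a ∈ Set.Icc α β → b ∈ Set.Icc α β → a < b →
      |flux b - flux a| ≤ lam * (b - a) := by
    intro a b ha hb hab
    obtain ⟨c, hc, hderiv⟩ := exists_deriv_eq_slope flux hab hdiff.continuous.continuousOn
      hdiff.differentiableOn
    have hcI : c ∈ Set.Icc α β := ⟨le_trans ha.1 hc.1.le, le_trans hc.2.le hb.2⟩
    rw [eq_div_iff (sub_ne_zero.mpr hab.ne')] at hderiv
    rw [← hderiv, abs_mul, abs_of_pos (by linarith : (0:ℝ) < b - a)]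
    exact mul_le_mul_of_nonneg_right (le_trans (hM c hcI) hlam) (by linarith)
  intro a ha b hb
  rcases lt_trichotomy a b with h | h | h
  · rw [abs_sub_comm, abs_sub_comm a b, abs_of_pos (by linarith : (0:ℝ) < b - a)]
    exact key a b ha hb h
  · subst h; simp
  · rw [abs_of_pos (by linarith : (0:ℝ) < a - b)]
    exact key b a hb ha h

lemma convexIcc {lo hi x y s : ℝ} (hx : x ∈ Set.Icc lo hi) (hy : y ∈ Set.Icc lo hi)
    (hs0 : 0 ≤ s) (hs1 : s ≤ 1) : (1 - s) * x + s * y ∈ Set.Icc lo hi := by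
  constructor
  · nlinarith [mul_nonneg (by linarith : (0:ℝ) ≤ 1 - s) (by linarith [hx.1] : (0:ℝ) ≤ x - lo),
      mul_nonneg hs0 (by linarith [hy.1] : (0:ℝ) ≤ y - lo)]
  · nlinarith [mul_nonneg (by linarith : (0:ℝ) ≤ 1 - s) (by linarith [hx.2] : (0:ℝ) ≤ hi - x),
      mul_nonneg hs0 (by linarith [hy.2] : (0:ℝ) ≤ hi - y)]

/-- Total variation in time estimates for the D1Q2 scheme. -/
theorem stmt6 (flux : ℝ → ℝ) (hflux : ContDiff ℝ 1 flux)
    (α β M lam s : ℝ) (hαβ : α ≤ β) (hlampos : 0 < lam)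
    (hs : s ∈ Set.Ioc (0 : ℝ) 1)
    (hM : ∀ ξ ∈ Set.Icc α β, |deriv flux ξ| ≤ M) (hlam : M ≤ lam)
    (fp fm u : ℕ → ℤ → ℝ)
    (hu : ∀ n j, u n j = fp n j + fm n j)
    (hrecp : ∀ n j, fp (n + 1) j = (1 - s) * fp n (j - 1) + s * hp lam flux (u n (j - 1)))
    (hrecm : ∀ n j, fm (n + 1) j = (1 - s) * fm n (j + 1) + s * hm lam flux (u n (j + 1)))
    (hinit : ∀ j, u 0 j ∈ Set.Icc α β)
    (hTV0 : tvSeq (u 0) < ⊤)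
    (hinitp : ∀ j, fp 0 j = hp lam flux (u 0 j))
    (hinitm : ∀ j, fm 0 j = hm lam flux (u 0 j)) :
    (∀ n : ℕ,
      (∑' j : ℤ, (ENNReal.ofReal |fp (n + 2) j - fp (n + 1) j|
          + ENNReal.ofReal |fm (n + 2) j - fm (n + 1) j|)) ≤
      (∑' j : ℤ, (ENNReal.ofReal |fp (n + 1) j - fp n j|
          + ENNReal.ofReal |fm (n + 1) j - fm n j|))) ∧
    (∀ n : ℕ,
      (∑' j : ℤ, (ENNReal.ofReal |fp (n + 1) j - fp n j|
          + ENNReal.ofReal |fm (n + 1) j - fm n j|)) ≤ 2 * tvSeq (u 0)) := by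
  obtain ⟨hs0, hs1⟩ := hs
  have hl2 : (0:ℝ) < 2 * lam := by linarith
  have lip := lipflux flux hflux α β M lam hM hlam
  -- basic identities about hp and hm
  have hpd : ∀ a b : ℝ, hp lam flux a - hp lam flux b
      = (lam * (a - b) + (flux a - flux b)) / (2 * lam) := by
    intro a b; unfold hp; field_simp; ring
  have hmd : ∀ a b : ℝ, hm lam flux a - hm lam flux b
      = (lam * (a - b) - (flux a - flux b)) / (2 * lam) := by
    intro a b; unfold hm; field_simp; ring
  have sumId : ∀ a ∈ Set.Icc α β, ∀ b ∈ Set.Icc α β,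
      |hp lam flux a - hp lam flux b| + |hm lam flux a - hm lam flux b| = |a - b| := by
    intro a ha b hb
    rw [hpd, hmd, abs_div, abs_div, abs_of_pos hl2, ← add_div,
      absId lam (a - b) (flux a - flux b) (lip a ha b hb)]
    exact mul_div_cancel_left₀ _ hl2.ne'
  have hple : ∀ a ∈ Set.Icc α β, ∀ b ∈ Set.Icc α β,
      |hp lam flux a - hp lam flux b| ≤ |a - b| := by
    intro a ha b hb
    have h := sumId a ha b hb
    have := abs_nonneg (hm lam flux a - hm lam flux b)
    linarith
  have hmle : ∀ a ∈ Set.Icc α β, ∀ b ∈ Set.Icc α β,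
      |hm lam flux a - hm lam flux b| ≤ |a - b| := by
    intro a ha b hb
    have h := sumId a ha b hb
    have := abs_nonneg (hp lam flux a - hp lam flux b)
    linarith
  have hp_mono : ∀ a ∈ Set.Icc α β, ∀ b ∈ Set.Icc α β, a ≤ b →
      hp lam flux a ≤ hp lam flux b := by
    intro a ha b hb hab
    have h := lip b hb a ha
    rw [abs_of_nonneg (sub_nonneg.mpr hab)] at h
    have h1 := (abs_le.mp h).1
    have hnum : lam * a + flux a ≤ lam * b + flux b := by linarith
    unfold hp
    gcongr
  have hm_mono : ∀ a ∈ Set.Icc α β, ∀ b ∈ Set.Icc α β, a ≤ b →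
      hm lam flux a ≤ hm lam flux b := by
    intro a ha b hb hab
    have h := lip b hb a ha
    rw [abs_of_nonneg (sub_nonneg.mpr hab)] at h
    have h2 := (abs_le.mp h).2
    have hnum : lam * a - flux a ≤ lam * b - flux b := by linarith
    unfold hm
    gcongr
  have eα : hp lam flux α + hm lam flux α = α := by
    unfold hp hm; field_simp; ring
  have eβ : hp lam flux β + hm lam flux β = β := by
    unfold hp hm; field_simp; ring
  have lmem : α ∈ Set.Icc α β := Set.left_mem_Icc.mpr hαβ
  have rmem : β ∈ Set.Icc α β := Set.right_mem_Icc.mpr hαβ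
  -- invariance
  have main : ∀ n, ∀ j, fp n j ∈ Set.Icc (hp lam flux α) (hp lam flux β)
      ∧ fm n j ∈ Set.Icc (hm lam flux α) (hm lam flux β) := by
    intro n
    induction n with
    | zero =>
      intro j
      constructor
      · rw [hinitp j]
        exact ⟨hp_mono α lmem _ (hinit j) (hinit j).1, hp_mono _ (hinit j) β rmem (hinit j).2⟩
      · rw [hinitm j]
        exact ⟨hm_mono α lmem _ (hinit j) (hinit j).1, hm_mono _ (hinit j) β rmem (hinit j).2⟩
    | succ n ih =>
      have hun : ∀ j, u n j ∈ Set.Icc α β := by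
        intro j
        rw [hu]
        obtain ⟨h1, h2⟩ := ih j
        exact ⟨by rw [← eα]; exact add_le_add h1.1 h2.1,
               by rw [← eβ]; exact add_le_add h1.2 h2.2⟩
      intro j
      constructor
      · rw [hrecp n j]
        exact convexIcc (ih (j-1)).1
          ⟨hp_mono α lmem _ (hun (j-1)) (hun (j-1)).1, hp_mono _ (hun (j-1)) β rmem (hun (j-1)).2⟩
          hs0.le hs1
      · rw [hrecm n j]
        exact convexIcc (ih (j+1)).2
          ⟨hm_mono α lmem _ (hun (j+1)) (hun (j+1)).1, hm_mono _ (hun (j+1)) β rmem (hun (j+1)).2⟩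
          hs0.le hs1
  have uinv : ∀ n j, u n j ∈ Set.Icc α β := by
    intro n j
    rw [hu]
    obtain ⟨h1, h2⟩ := main n j
    exact ⟨by rw [← eα]; exact add_le_add h1.1 h2.1,
           by rw [← eβ]; exact add_le_add h1.2 h2.2⟩
  -- Part 1 : time TV is nonincreasing
  have step : ∀ n : ℕ,
      (∑' j : ℤ, (ENNReal.ofReal |fp (n + 2) j - fp (n + 1) j|
          + ENNReal.ofReal |fm (n + 2) j - fm (n + 1) j|)) ≤
      (∑' j : ℤ, (ENNReal.ofReal |fp (n + 1) j - fp n j|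
          + ENNReal.ofReal |fm (n + 1) j - fm n j|)) := by
    intro n
    set c1 := ENNReal.ofReal (1 - s) with hc1
    set c2 := ENNReal.ofReal s with hc2
    set A : ℤ → ENNReal := fun j => ENNReal.ofReal |fp (n + 1) j - fp n j| with hA
    set B : ℤ → ENNReal := fun j => ENNReal.ofReal |fm (n + 1) j - fm n j| with hB
    set P : ℤ → ENNReal := fun j =>
      ENNReal.ofReal |hp lam flux (u (n + 1) j) - hp lam flux (u n j)| with hP
    set Q : ℤ → ENNReal := fun j =>
      ENNReal.ofReal |hm lam flux (u (n + 1) j) - hm lam flux (u n j)| with hQ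
    set A' : ℤ → ENNReal := fun j => ENNReal.ofReal |fp (n + 2) j - fp (n + 1) j| with hA'
    set B' : ℤ → ENNReal := fun j => ENNReal.ofReal |fm (n + 2) j - fm (n + 1) j| with hB'
    have hc12 : c1 + c2 = 1 := by
      rw [hc1, hc2, ← ENNReal.ofReal_add (by linarith) hs0.le]
      norm_num
    have e1 : ∀ j : ℤ, fp (n + 2) j - fp (n + 1) j
        = (1 - s) * (fp (n + 1) (j - 1) - fp n (j - 1))
          + s * (hp lam flux (u (n + 1) (j - 1)) - hp lam flux (u n (j - 1))) := by
      intro j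
      rw [show (n : ℕ) + 2 = n + 1 + 1 from rfl, hrecp (n + 1) j, hrecp n j]
      ring
    have e2 : ∀ j : ℤ, fm (n + 2) j - fm (n + 1) j
        = (1 - s) * (fm (n + 1) (j + 1) - fm n (j + 1))
          + s * (hm lam flux (u (n + 1) (j + 1)) - hm lam flux (u n (j + 1))) := by
      intro j
      rw [show (n : ℕ) + 2 = n + 1 + 1 from rfl, hrecm (n + 1) j, hrecm n j]
      ring
    have hptw : ∀ j : ℤ, A' j ≤ c1 * A (j - 1) + c2 * P (j - 1) := by
      intro j
      have habs : |fp (n + 2) j - fp (n + 1) j|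
          ≤ (1 - s) * |fp (n + 1) (j - 1) - fp n (j - 1)|
            + s * |hp lam flux (u (n + 1) (j - 1)) - hp lam flux (u n (j - 1))| := by
        rw [e1 j]
        calc |(1 - s) * (fp (n + 1) (j - 1) - fp n (j - 1))
              + s * (hp lam flux (u (n + 1) (j - 1)) - hp lam flux (u n (j - 1)))|
            ≤ |(1 - s) * (fp (n + 1) (j - 1) - fp n (j - 1))|
              + |s * (hp lam flux (u (n + 1) (j - 1)) - hp lam flux (u n (j - 1)))| :=
                abs_add_le _ _
          _ = _ := by
              rw [abs_mul, abs_mul, abs_of_nonneg (by linarith : (0:ℝ) ≤ 1 - s),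
                abs_of_nonneg hs0.le]
      calc A' j ≤ ENNReal.ofReal ((1 - s) * |fp (n + 1) (j - 1) - fp n (j - 1)|
              + s * |hp lam flux (u (n + 1) (j - 1)) - hp lam flux (u n (j - 1))|) :=
            ENNReal.ofReal_le_ofReal habs
        _ = c1 * A (j - 1) + c2 * P (j - 1) := by
            rw [ENNReal.ofReal_add (mul_nonneg (by linarith) (abs_nonneg _))
              (mul_nonneg hs0.le (abs_nonneg _)),
              ENNReal.ofReal_mul (by linarith : (0:ℝ) ≤ 1 - s),
              ENNReal.ofReal_mul hs0.le]
    have hmtw : ∀ j : ℤ, B' j ≤ c1 * B (j + 1) + c2 * Q (j + 1) := by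
      intro j
      have habs : |fm (n + 2) j - fm (n + 1) j|
          ≤ (1 - s) * |fm (n + 1) (j + 1) - fm n (j + 1)|
            + s * |hm lam flux (u (n + 1) (j + 1)) - hm lam flux (u n (j + 1))| := by
        rw [e2 j]
        calc |(1 - s) * (fm (n + 1) (j + 1) - fm n (j + 1))
              + s * (hm lam flux (u (n + 1) (j + 1)) - hm lam flux (u n (j + 1)))|
            ≤ |(1 - s) * (fm (n + 1) (j + 1) - fm n (j + 1))|
              + |s * (hm lam flux (u (n + 1) (j + 1)) - hm lam flux (u n (j + 1)))| :=
                abs_add_le _ _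
          _ = _ := by
              rw [abs_mul, abs_mul, abs_of_nonneg (by linarith : (0:ℝ) ≤ 1 - s),
                abs_of_nonneg hs0.le]
      calc B' j ≤ ENNReal.ofReal ((1 - s) * |fm (n + 1) (j + 1) - fm n (j + 1)|
              + s * |hm lam flux (u (n + 1) (j + 1)) - hm lam flux (u n (j + 1))|) :=
            ENNReal.ofReal_le_ofReal habs
        _ = c1 * B (j + 1) + c2 * Q (j + 1) := by
            rw [ENNReal.ofReal_add (mul_nonneg (by linarith) (abs_nonneg _))
              (mul_nonneg hs0.le (abs_nonneg _)),
              ENNReal.ofReal_mul (by linarith : (0:ℝ) ≤ 1 - s),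
              ENNReal.ofReal_mul hs0.le]
    have hPQ : ∀ j : ℤ, P j + Q j ≤ A j + B j := by
      intro j
      have h1 : |hp lam flux (u (n + 1) j) - hp lam flux (u n j)|
          + |hm lam flux (u (n + 1) j) - hm lam flux (u n j)| = |u (n + 1) j - u n j| :=
        sumId _ (uinv (n + 1) j) _ (uinv n j)
      have h2 : |u (n + 1) j - u n j| ≤ |fp (n + 1) j - fp n j| + |fm (n + 1) j - fm n j| := by
        rw [hu (n + 1) j, hu n j]
        have : fp (n + 1) j + fm (n + 1) j - (fp n j + fm n j)
            = (fp (n + 1) j - fp n j) + (fm (n + 1) j - fm n j) := by ring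
        rw [this]
        exact abs_add_le _ _
      calc P j + Q j
          = ENNReal.ofReal (|hp lam flux (u (n + 1) j) - hp lam flux (u n j)|
            + |hm lam flux (u (n + 1) j) - hm lam flux (u n j)|) :=
            (ENNReal.ofReal_add (abs_nonneg _) (abs_nonneg _)).symm
        _ = ENNReal.ofReal |u (n + 1) j - u n j| := by rw [h1]
        _ ≤ ENNReal.ofReal (|fp (n + 1) j - fp n j| + |fm (n + 1) j - fm n j|) :=
            ENNReal.ofReal_le_ofReal h2
        _ = A j + B j := ENNReal.ofReal_add (abs_nonneg _) (abs_nonneg _)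
    show (∑' j : ℤ, (A' j + B' j)) ≤ ∑' j : ℤ, (A j + B j)
    calc (∑' j : ℤ, (A' j + B' j))
        ≤ ∑' j : ℤ, ((c1 * A (j - 1) + c2 * P (j - 1)) + (c1 * B (j + 1) + c2 * Q (j + 1))) :=
          ENNReal.tsum_le_tsum fun j => add_le_add (hptw j) (hmtw j)
      _ = (∑' j : ℤ, (c1 * A (j - 1) + c2 * P (j - 1)))
          + ∑' j : ℤ, (c1 * B (j + 1) + c2 * Q (j + 1)) := ENNReal.tsum_add
      _ = (∑' j : ℤ, (c1 * A j + c2 * P j)) + ∑' j : ℤ, (c1 * B j + c2 * Q j) :=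
          congrArg₂ (· + ·) (shift_sub_tsum fun j => c1 * A j + c2 * P j)
            (shift_add_tsum fun j => c1 * B j + c2 * Q j)
      _ = (c1 * ∑' j : ℤ, A j) + (c2 * ∑' j : ℤ, P j)
          + ((c1 * ∑' j : ℤ, B j) + (c2 * ∑' j : ℤ, Q j)) := by
          rw [ENNReal.tsum_add, ENNReal.tsum_add, ENNReal.tsum_mul_left, ENNReal.tsum_mul_left,
            ENNReal.tsum_mul_left, ENNReal.tsum_mul_left]
      _ = c1 * ((∑' j : ℤ, A j) + ∑' j : ℤ, B j)
          + c2 * ((∑' j : ℤ, P j) + ∑' j : ℤ, Q j) := by ring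
      _ ≤ c1 * ((∑' j : ℤ, A j) + ∑' j : ℤ, B j)
          + c2 * ((∑' j : ℤ, A j) + ∑' j : ℤ, B j) := by
          have h : ((∑' j : ℤ, P j) + ∑' j : ℤ, Q j) ≤ (∑' j : ℤ, A j) + ∑' j : ℤ, B j := by
            rw [← ENNReal.tsum_add, ← ENNReal.tsum_add]
            exact ENNReal.tsum_le_tsum hPQ
          exact add_le_add_right (mul_le_mul_right h c2) _
      _ = (c1 + c2) * ((∑' j : ℤ, A j) + ∑' j : ℤ, B j) := by ring
      _ = ∑' j : ℤ, (A j + B j) := by rw [hc12, one_mul, ENNReal.tsum_add]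
  refine ⟨step, ?_⟩
  -- base case
  have base : (∑' j : ℤ, (ENNReal.ofReal |fp 1 j - fp 0 j|
      + ENNReal.ofReal |fm 1 j - fm 0 j|)) ≤ 2 * tvSeq (u 0) := by
    have ep : ∀ j : ℤ, fp 1 j - fp 0 j = hp lam flux (u 0 (j - 1)) - hp lam flux (u 0 j) := by
      intro j
      rw [hrecp 0 j, hinitp (j - 1), hinitp j]
      ring
    have em : ∀ j : ℤ, fm 1 j - fm 0 j = hm lam flux (u 0 (j + 1)) - hm lam flux (u 0 j) := by
      intro j
      rw [hrecm 0 j, hinitm (j + 1), hinitm j]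
      ring
    have hbd : ∀ j : ℤ, ENNReal.ofReal |fp 1 j - fp 0 j| + ENNReal.ofReal |fm 1 j - fm 0 j|
        ≤ ENNReal.ofReal |u 0 (j - 1) - u 0 j| + ENNReal.ofReal |u 0 (j + 1) - u 0 j| := by
      intro j
      apply add_le_add
      · apply ENNReal.ofReal_le_ofReal
        rw [ep j]
        exact hple _ (hinit (j - 1)) _ (hinit j)
      · apply ENNReal.ofReal_le_ofReal
        rw [em j]
        exact hmle _ (hinit (j + 1)) _ (hinit j)
    have hshift : (∑' j : ℤ, ENNReal.ofReal |u 0 (j - 1) - u 0 j|) = tvSeq (u 0) := by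
      have heq : ∀ j : ℤ, ENNReal.ofReal |u 0 (j - 1) - u 0 j|
          = (fun k : ℤ => ENNReal.ofReal |u 0 (k + 1) - u 0 k|) (j - 1) := by
        intro j
        simp only
        rw [abs_sub_comm]
        norm_num
      calc (∑' j : ℤ, ENNReal.ofReal |u 0 (j - 1) - u 0 j|)
          = ∑' j : ℤ, (fun k : ℤ => ENNReal.ofReal |u 0 (k + 1) - u 0 k|) (j - 1) :=
            tsum_congr heq
        _ = ∑' j : ℤ, ENNReal.ofReal |u 0 (j + 1) - u 0 j| :=
            shift_sub_tsum fun k => ENNReal.ofReal |u 0 (k + 1) - u 0 k|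
        _ = tvSeq (u 0) := rfl
    calc (∑' j : ℤ, (ENNReal.ofReal |fp 1 j - fp 0 j| + ENNReal.ofReal |fm 1 j - fm 0 j|))
        ≤ ∑' j : ℤ, (ENNReal.ofReal |u 0 (j - 1) - u 0 j|
            + ENNReal.ofReal |u 0 (j + 1) - u 0 j|) := ENNReal.tsum_le_tsum hbd
      _ = (∑' j : ℤ, ENNReal.ofReal |u 0 (j - 1) - u 0 j|)
          + ∑' j : ℤ, ENNReal.ofReal |u 0 (j + 1) - u 0 j| := ENNReal.tsum_add
      _ = tvSeq (u 0) + tvSeq (u 0) := by rw [hshift]; rfl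
      _ = 2 * tvSeq (u 0) := (two_mul _).symm
  intro n
  induction n with
  | zero => exact base
  | succ n ih => exact le_trans (step n) ih
end

section
/- Under the D1Q2 scheme with s ∈ (0,1], λ ≥ M, and equilibrium initial data, the time increments of the conserved and nonconserved moments satisfy ∑_{j∈ℤ} |u_j^{n+1} − u_j^n| ≤ 2 TV(u^0) and ∑_{j∈ℤ} |v_j^{n+1} − v_j^n| ≤ 2λ TV(u^0) for all n ∈ ℕ. -/
lemma hp_hm_lip {flux : ℝ → ℝ} {lam x y : ℝ} (hlampos : 0 < lam)
    (hφ : |flux x - flux y| ≤ lam * |x - y|) :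
    |hp lam flux x - hp lam flux y| + |hm lam flux x - hm lam flux y| ≤ |x - y| := by
  have h2 : (0:ℝ) < 2 * lam := by linarith
  have e1 : hp lam flux x - hp lam flux y
      = (lam * (x - y) + (flux x - flux y)) / (2 * lam) := by unfold hp; field_simp; ring
  have e2 : hm lam flux x - hm lam flux y
      = (lam * (x - y) - (flux x - flux y)) / (2 * lam) := by unfold hm; field_simp; ring
  rw [e1, e2, abs_div, abs_div, abs_of_pos h2, ← add_div, div_le_iff₀ h2]
  set d := x - y with hd
  set e := flux x - flux y with he
  obtain ⟨hel, heu⟩ := abs_le.mp hφ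
  have hld : 0 ≤ lam * |d| := mul_nonneg (le_of_lt hlampos) (abs_nonneg d)
  rcases abs_cases d with ⟨h5, h6⟩ | ⟨h5, h6⟩ <;> rw [h5] at hel heu ⊢ <;>
    rcases abs_cases (lam * d + e) with ⟨h1, _⟩ | ⟨h1, _⟩ <;>
      rcases abs_cases (lam * d - e) with ⟨h3, _⟩ | ⟨h3, _⟩ <;>
        rw [h1, h3] <;> nlinarith [mul_nonneg (le_of_lt hlampos) (abs_nonneg d)]

lemma hp_mono_s7 {flux : ℝ → ℝ} {lam x y : ℝ} (hlampos : 0 < lam)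
    (hφ : |flux x - flux y| ≤ lam * |x - y|) (hxy : x ≤ y) :
    hp lam flux x ≤ hp lam flux y := by
  have h2 : (0:ℝ) < 2 * lam := by linarith
  have habs : |x - y| = y - x := by rw [abs_sub_comm]; exact abs_of_nonneg (by linarith)
  rw [habs] at hφ
  have h3 := neg_abs_le (flux x - flux y)
  have h4 := le_abs_self (flux x - flux y)
  have hnum : lam * x + flux x ≤ lam * y + flux y := by nlinarith
  unfold hp
  rw [div_le_div_iff₀ h2 h2]
  exact mul_le_mul_of_nonneg_right hnum (le_of_lt h2)

lemma hm_mono_s7 {flux : ℝ → ℝ} {lam x y : ℝ} (hlampos : 0 < lam)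
    (hφ : |flux x - flux y| ≤ lam * |x - y|) (hxy : x ≤ y) :
    hm lam flux x ≤ hm lam flux y := by
  have h2 : (0:ℝ) < 2 * lam := by linarith
  have habs : |x - y| = y - x := by rw [abs_sub_comm]; exact abs_of_nonneg (by linarith)
  rw [habs] at hφ
  have h3 := neg_abs_le (flux x - flux y)
  have h4 := le_abs_self (flux x - flux y)
  have hnum : lam * x - flux x ≤ lam * y - flux y := by nlinarith
  unfold hm
  rw [div_le_div_iff₀ h2 h2]
  exact mul_le_mul_of_nonneg_right hnum (le_of_lt h2)

lemma convex_comb_mem {lo hi a b t : ℝ} (ha : a ∈ Set.Icc lo hi) (hb : b ∈ Set.Icc lo hi)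
    (ht0 : 0 ≤ t) (ht1 : t ≤ 1) : (1 - t) * a + t * b ∈ Set.Icc lo hi := by
  obtain ⟨ha1, ha2⟩ := ha
  obtain ⟨hb1, hb2⟩ := hb
  constructor <;> nlinarith

/-- Total variation in time estimates for the D1Q2 scheme. -/
theorem stmt7 (flux : ℝ → ℝ) (hflux : ContDiff ℝ 1 flux)
    (α β M lam s : ℝ) (hαβ : α ≤ β) (hlampos : 0 < lam)
    (hs : s ∈ Set.Ioc (0 : ℝ) 1)
    (hM : ∀ ξ ∈ Set.Icc α β, |deriv flux ξ| ≤ M) (hlam : M ≤ lam)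
    (fp fm u v : ℕ → ℤ → ℝ)
    (hu : ∀ n j, u n j = fp n j + fm n j)
    (hv : ∀ n j, v n j = lam * (fp n j - fm n j))
    (hrecp : ∀ n j, fp (n + 1) j = (1 - s) * fp n (j - 1) + s * hp lam flux (u n (j - 1)))
    (hrecm : ∀ n j, fm (n + 1) j = (1 - s) * fm n (j + 1) + s * hm lam flux (u n (j + 1)))
    (hinit : ∀ j, u 0 j ∈ Set.Icc α β)
    (hTV0 : tvSeq (u 0) < ⊤)
    (hinitp : ∀ j, fp 0 j = hp lam flux (u 0 j))
    (hinitm : ∀ j, fm 0 j = hm lam flux (u 0 j)) :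
    ∀ n : ℕ,
      (∑' j : ℤ, ENNReal.ofReal |u (n + 1) j - u n j|) ≤ 2 * tvSeq (u 0) ∧
      (∑' j : ℤ, ENNReal.ofReal |v (n + 1) j - v n j|) ≤
        ENNReal.ofReal (2 * lam) * tvSeq (u 0) := by
  obtain ⟨hs0, hs1⟩ := hs
  -- Lipschitz bound for the flux on [α, β]
  have hlip : ∀ x ∈ Set.Icc α β, ∀ y ∈ Set.Icc α β,
      |flux x - flux y| ≤ lam * |x - y| := by
    intro x hx y hy
    have := (convex_Icc α β).norm_image_sub_le_of_norm_deriv_le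
      (f := flux) (C := lam)
      (fun z _ => (hflux.differentiable one_ne_zero) z)
      (fun z hz => ((hM z hz).trans hlam)) hy hx
    simpa [Real.norm_eq_abs] using this
  -- Maximum principle
  have bounds : ∀ n, (∀ j, fp n j ∈ Set.Icc (hp lam flux α) (hp lam flux β)) ∧
      (∀ j, fm n j ∈ Set.Icc (hm lam flux α) (hm lam flux β)) := by
    intro n
    induction n with
    | zero =>
      constructor
      · intro j
        rw [hinitp j]
        exact ⟨hp_mono_s7 hlampos (hlip _ ⟨le_rfl, hαβ⟩ _ (hinit j)) (hinit j).1,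
          hp_mono_s7 hlampos (hlip _ (hinit j) _ ⟨hαβ, le_rfl⟩) (hinit j).2⟩
      · intro j
        rw [hinitm j]
        exact ⟨hm_mono_s7 hlampos (hlip _ ⟨le_rfl, hαβ⟩ _ (hinit j)) (hinit j).1,
          hm_mono_s7 hlampos (hlip _ (hinit j) _ ⟨hαβ, le_rfl⟩) (hinit j).2⟩
    | succ n ih =>
      obtain ⟨ihp, ihm⟩ := ih
      have humem : ∀ j, u n j ∈ Set.Icc α β := by
        intro j
        have h1 := ihp j
        have h2 := ihm j
        have hsum : hp lam flux α + hm lam flux α = α := by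
          unfold hp hm; field_simp; ring
        have hsum2 : hp lam flux β + hm lam flux β = β := by
          unfold hp hm; field_simp; ring
        rw [hu n j]
        constructor
        · rw [← hsum]; exact add_le_add h1.1 h2.1
        · rw [← hsum2]; exact add_le_add h1.2 h2.2
      constructor
      · intro j
        rw [hrecp n j]
        exact convex_comb_mem (ihp (j - 1))
          ⟨hp_mono_s7 hlampos (hlip _ ⟨le_rfl, hαβ⟩ _ (humem (j-1))) (humem (j-1)).1,
           hp_mono_s7 hlampos (hlip _ (humem (j-1)) _ ⟨hαβ, le_rfl⟩) (humem (j-1)).2⟩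
          (le_of_lt hs0) hs1
      · intro j
        rw [hrecm n j]
        exact convex_comb_mem (ihm (j + 1))
          ⟨hm_mono_s7 hlampos (hlip _ ⟨le_rfl, hαβ⟩ _ (humem (j+1))) (humem (j+1)).1,
           hm_mono_s7 hlampos (hlip _ (humem (j+1)) _ ⟨hαβ, le_rfl⟩) (humem (j+1)).2⟩
          (le_of_lt hs0) hs1
  have humem : ∀ n j, u n j ∈ Set.Icc α β := by
    intro n j
    obtain ⟨h1, h2⟩ := bounds n
    have hsum : hp lam flux α + hm lam flux α = α := by unfold hp hm; field_simp; ring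
    have hsum2 : hp lam flux β + hm lam flux β = β := by unfold hp hm; field_simp; ring
    rw [hu n j]
    exact ⟨by rw [← hsum]; exact add_le_add (h1 j).1 (h2 j).1,
      by rw [← hsum2]; exact add_le_add (h1 j).2 (h2 j).2⟩
  -- key combined Lipschitz bound
  have key : ∀ n k, |hp lam flux (u (n+1) k) - hp lam flux (u n k)|
      + |hm lam flux (u (n+1) k) - hm lam flux (u n k)| ≤ |u (n+1) k - u n k| :=
    fun n k => hp_hm_lip hlampos (hlip _ (humem (n+1) k) _ (humem n k))
  -- the L¹ functional
  set Δp : ℕ → ℤ → ℝ := fun n j => fp (n+1) j - fp n j with hΔp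
  set Δm : ℕ → ℤ → ℝ := fun n j => fm (n+1) j - fm n j with hΔm
  set D : ℕ → ENNReal :=
    fun n => ∑' j : ℤ, (ENNReal.ofReal |Δp n j| + ENNReal.ofReal |Δm n j|) with hD
  -- contraction : D (n+1) ≤ D n
  have contraction : ∀ n, D (n+1) ≤ D n := by
    intro n
    set P : ℤ → ENNReal := fun k => ENNReal.ofReal ((1 - s) * |Δp n k|
      + s * |hp lam flux (u (n+1) k) - hp lam flux (u n k)|) with hP
    set Q : ℤ → ENNReal := fun k => ENNReal.ofReal ((1 - s) * |Δm n k|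
      + s * |hm lam flux (u (n+1) k) - hm lam flux (u n k)|) with hQ
    have step1 : D (n+1) ≤ ∑' j : ℤ, (P (j - 1) + Q (j + 1)) := by
      apply ENNReal.tsum_le_tsum
      intro j
      have hp1 : Δp (n+1) j = (1 - s) * Δp n (j - 1)
          + s * (hp lam flux (u (n+1) (j-1)) - hp lam flux (u n (j-1))) := by
        simp only [hΔp]
        rw [hrecp (n+1) j, hrecp n j]; ring
      have hm1 : Δm (n+1) j = (1 - s) * Δm n (j + 1)
          + s * (hm lam flux (u (n+1) (j+1)) - hm lam flux (u n (j+1))) := by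
        simp only [hΔm]
        rw [hrecm (n+1) j, hrecm n j]; ring
      have b1 : |Δp (n+1) j| ≤ (1 - s) * |Δp n (j-1)|
          + s * |hp lam flux (u (n+1) (j-1)) - hp lam flux (u n (j-1))| := by
        rw [hp1]
        calc _ ≤ |(1 - s) * Δp n (j - 1)|
              + |s * (hp lam flux (u (n+1) (j-1)) - hp lam flux (u n (j-1)))| := abs_add_le _ _
          _ = _ := by
              rw [abs_mul, abs_mul, abs_of_nonneg (by linarith : (0:ℝ) ≤ 1 - s),
                abs_of_nonneg (le_of_lt hs0)]
      have b2 : |Δm (n+1) j| ≤ (1 - s) * |Δm n (j+1)|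
          + s * |hm lam flux (u (n+1) (j+1)) - hm lam flux (u n (j+1))| := by
        rw [hm1]
        calc _ ≤ |(1 - s) * Δm n (j + 1)|
              + |s * (hm lam flux (u (n+1) (j+1)) - hm lam flux (u n (j+1)))| := abs_add_le _ _
          _ = _ := by
              rw [abs_mul, abs_mul, abs_of_nonneg (by linarith : (0:ℝ) ≤ 1 - s),
                abs_of_nonneg (le_of_lt hs0)]
      exact add_le_add (ENNReal.ofReal_le_ofReal b1) (ENNReal.ofReal_le_ofReal b2)
    have step2 : (∑' j : ℤ, (P (j - 1) + Q (j + 1)))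
        = (∑' j : ℤ, P j) + (∑' j : ℤ, Q j) := by
      rw [ENNReal.tsum_add]
      congr 1
      · exact (Equiv.subRight (1:ℤ)).tsum_eq P
      · exact (Equiv.addRight (1:ℤ)).tsum_eq Q
    have step3 : (∑' j : ℤ, P j) + (∑' j : ℤ, Q j) ≤ D n := by
      rw [← ENNReal.tsum_add]
      apply ENNReal.tsum_le_tsum
      intro k
      have hnn1 : (0:ℝ) ≤ (1 - s) * |Δp n k|
          + s * |hp lam flux (u (n+1) k) - hp lam flux (u n k)| := by
        have := abs_nonneg (Δp n k)
        have := abs_nonneg (hp lam flux (u (n+1) k) - hp lam flux (u n k))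
        nlinarith
      have hsplit : P k + Q k = ENNReal.ofReal (((1 - s) * |Δp n k|
          + s * |hp lam flux (u (n+1) k) - hp lam flux (u n k)|)
          + ((1 - s) * |Δm n k|
          + s * |hm lam flux (u (n+1) k) - hm lam flux (u n k)|)) := by
        rw [ENNReal.ofReal_add hnn1]
        have := abs_nonneg (Δm n k)
        have := abs_nonneg (hm lam flux (u (n+1) k) - hm lam flux (u n k))
        nlinarith
      rw [hsplit, ← ENNReal.ofReal_add (abs_nonneg _) (abs_nonneg _)]
      apply ENNReal.ofReal_le_ofReal
      have hkey := key n k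
      have hud : u (n+1) k - u n k = Δp n k + Δm n k := by
        simp only [hΔp, hΔm]; rw [hu (n+1) k, hu n k]; ring
      have habs : |u (n+1) k - u n k| ≤ |Δp n k| + |Δm n k| := by
        rw [hud]; exact abs_add_le _ _
      nlinarith [abs_nonneg (Δp n k), abs_nonneg (Δm n k)]
    exact step1.trans (step2.trans_le step3)
  -- base case : D 0 ≤ tvSeq (u 0)
  have base : D 0 ≤ tvSeq (u 0) := by
    have hΔp0 : ∀ j, Δp 0 j = hp lam flux (u 0 (j-1)) - hp lam flux (u 0 j) := by
      intro j
      simp only [hΔp]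
      rw [hrecp 0 j, hinitp j, hinitp (j-1)]; ring
    have hΔm0 : ∀ j, Δm 0 j = hm lam flux (u 0 (j+1)) - hm lam flux (u 0 j) := by
      intro j
      simp only [hΔm]
      rw [hrecm 0 j, hinitm j, hinitm (j+1)]; ring
    set A : ℤ → ENNReal := fun j => ENNReal.ofReal |hp lam flux (u 0 j)
      - hp lam flux (u 0 (j+1))| with hA
    set B : ℤ → ENNReal := fun j => ENNReal.ofReal |hm lam flux (u 0 (j+1))
      - hm lam flux (u 0 j)| with hB
    have hDe : D 0 = (∑' j : ℤ, A (j - 1)) + (∑' j : ℤ, B j) := by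
      simp only [hD]
      rw [← ENNReal.tsum_add]
      apply tsum_congr
      intro j
      congr 1
      · simp only [hA]
        rw [hΔp0 j, sub_add_cancel]
      · simp only [hB]
        rw [hΔm0 j]
    have hshift : (∑' j : ℤ, A (j - 1)) = ∑' j : ℤ, A j :=
      (Equiv.subRight (1:ℤ)).tsum_eq A
    rw [hDe, hshift, ← ENNReal.tsum_add]
    unfold tvSeq
    apply ENNReal.tsum_le_tsum
    intro j
    simp only [hA, hB]
    rw [← ENNReal.ofReal_add (abs_nonneg _) (abs_nonneg _)]
    apply ENNReal.ofReal_le_ofReal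
    have hkey := hp_hm_lip hlampos (hlip _ (humem 0 j) _ (humem 0 (j+1)))
    rw [abs_sub_comm (hm lam flux (u 0 (j+1))), abs_sub_comm (u 0 (j+1))]
    exact hkey
  have Dle : ∀ n, D n ≤ tvSeq (u 0) := by
    intro n
    induction n with
    | zero => exact base
    | succ n ih => exact (contraction n).trans ih
  -- conclusion
  intro n
  constructor
  · calc (∑' j : ℤ, ENNReal.ofReal |u (n + 1) j - u n j|) ≤ D n := by
          apply ENNReal.tsum_le_tsum
          intro j
          have hud : u (n+1) j - u n j = Δp n j + Δm n j := by
            simp only [hΔp, hΔm]; rw [hu (n+1) j, hu n j]; ring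
          rw [← ENNReal.ofReal_add (abs_nonneg _) (abs_nonneg _)]
          apply ENNReal.ofReal_le_ofReal
          rw [hud]; exact abs_add_le _ _
      _ ≤ tvSeq (u 0) := Dle n
      _ ≤ 2 * tvSeq (u 0) := le_mul_of_one_le_left zero_le one_le_two
  · calc (∑' j : ℤ, ENNReal.ofReal |v (n + 1) j - v n j|)
        ≤ ∑' j : ℤ, ENNReal.ofReal lam
            * (ENNReal.ofReal |Δp n j| + ENNReal.ofReal |Δm n j|) := by
          apply ENNReal.tsum_le_tsum
          intro j
          have hvd : v (n+1) j - v n j = lam * (Δp n j - Δm n j) := by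
            simp only [hΔp, hΔm]; rw [hv (n+1) j, hv n j]; ring
          rw [hvd, abs_mul, abs_of_pos hlampos,
            ENNReal.ofReal_mul (le_of_lt hlampos)]
          apply mul_le_mul_right
          rw [← ENNReal.ofReal_add (abs_nonneg _) (abs_nonneg _)]
          exact ENNReal.ofReal_le_ofReal (abs_sub _ _)
      _ = ENNReal.ofReal lam * D n := by
          simp only [hD]
          exact ENNReal.tsum_mul_left
      _ ≤ ENNReal.ofReal lam * tvSeq (u 0) := mul_le_mul_right (Dle n) _
      _ ≤ ENNReal.ofReal (2 * lam) * tvSeq (u 0) := by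
          apply mul_le_mul_left
          exact ENNReal.ofReal_le_ofReal (by linarith)
end

section
/- Under the D1Q2 scheme with s ∈ (0,1], λ ≥ M, and equilibrium initial data v_j^0 = φ(u_j^0), the discrete equilibrium gap satisfies Δx ∑_{j∈ℤ} |φ(u_j^n) − v_j^n| ≤ (2λΔx/s) TV(u^0) for all n ∈ ℕ. -/
lemma s8_tsum_shift (f : ℤ → ENNReal) (k : ℤ) : ∑' j : ℤ, f (j + k) = ∑' j, f j :=
  (Equiv.addRight k).tsum_eq f

lemma s8_abs_comb {s p m gp gm : ℝ} (hs0 : 0 ≤ s) (hs1 : s ≤ 1)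
    (h : |gp| + |gm| ≤ |p + m|) :
    |(1 - s) * p + s * gp| + |(1 - s) * m + s * gm| ≤ |p| + |m| := by
  have h1 : |(1 - s) * p + s * gp| ≤ (1 - s) * |p| + s * |gp| := by
    calc |(1 - s) * p + s * gp| ≤ |(1 - s) * p| + |s * gp| := abs_add_le _ _
      _ = (1 - s) * |p| + s * |gp| := by
          rw [abs_mul, abs_mul, abs_of_nonneg (by linarith : (0:ℝ) ≤ 1 - s), abs_of_nonneg hs0]
  have h2 : |(1 - s) * m + s * gm| ≤ (1 - s) * |m| + s * |gm| := by
    calc |(1 - s) * m + s * gm| ≤ |(1 - s) * m| + |s * gm| := abs_add_le _ _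
      _ = (1 - s) * |m| + s * |gm| := by
          rw [abs_mul, abs_mul, abs_of_nonneg (by linarith : (0:ℝ) ≤ 1 - s), abs_of_nonneg hs0]
  have h3 : |p + m| ≤ |p| + |m| := abs_add_le _ _
  have h4 : s * (|gp| + |gm|) ≤ s * |p + m| := mul_le_mul_of_nonneg_left h hs0
  have h5 : s * |p + m| ≤ s * (|p| + |m|) := mul_le_mul_of_nonneg_left h3 hs0
  nlinarith

lemma s8_convex_mem {s x y A B : ℝ} (hs0 : 0 ≤ s) (hs1 : s ≤ 1)
    (hx : x ∈ Set.Icc A B) (hy : y ∈ Set.Icc A B) :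
    (1 - s) * x + s * y ∈ Set.Icc A B := by
  obtain ⟨hx1, hx2⟩ := hx
  obtain ⟨hy1, hy2⟩ := hy
  constructor <;> nlinarith

/-- Estimation of the discrete equilibrium gap for the D1Q2 scheme in moment form. -/
theorem stmt8 (flux : ℝ → ℝ) (hflux : ContDiff ℝ 1 flux)
    (α β M lam s dx dt : ℝ) (hαβ : α ≤ β) (hlampos : 0 < lam)
    (hs : s ∈ Set.Ioc (0 : ℝ) 1)
    (hM : ∀ ξ ∈ Set.Icc α β, |deriv flux ξ| ≤ M) (hlam : M ≤ lam)
    (hdt : 0 < dt) (hdx : dx = lam * dt)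
    (u v : ℕ → ℤ → ℝ)
    (hrecu : ∀ n j, u (n + 1) j =
      (1 / 2) * (u n (j + 1) + u n (j - 1))
      - (1 / (2 * lam)) * (((1 - s) * v n (j + 1) + s * flux (u n (j + 1)))
          - ((1 - s) * v n (j - 1) + s * flux (u n (j - 1)))))
    (hrecv : ∀ n j, v (n + 1) j =
      (1 / 2) * (((1 - s) * v n (j + 1) + s * flux (u n (j + 1)))
          + ((1 - s) * v n (j - 1) + s * flux (u n (j - 1))))
      - (lam / 2) * (u n (j + 1) - u n (j - 1)))
    (hinit : ∀ j, u 0 j ∈ Set.Icc α β)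
    (hinitv : ∀ j, v 0 j = flux (u 0 j))
    (hTV0 : tvSeq (u 0) < ⊤) :
    ∀ n : ℕ,
      ENNReal.ofReal dx * (∑' j : ℤ, ENNReal.ofReal |flux (u n j) - v n j|) ≤
        ENNReal.ofReal (2 * lam * dx / s) * tvSeq (u 0) := by
  obtain ⟨hspos, hs1⟩ := hs
  have hs0 : (0:ℝ) ≤ s := le_of_lt hspos
  have hs1' : (0:ℝ) ≤ 1 - s := by linarith
  have hlamne : lam ≠ 0 := ne_of_gt hlampos
  have hlam0 : (0:ℝ) ≤ lam := le_of_lt hlampos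
  have hM0 : (0:ℝ) ≤ M := le_trans (abs_nonneg _) (hM α ⟨le_refl _, hαβ⟩)
  have hdx0 : (0:ℝ) ≤ dx := by rw [hdx]; positivity
  -- Lipschitz bound for flux on [α, β]
  have hLip : ∀ a ∈ Set.Icc α β, ∀ b ∈ Set.Icc α β, |flux b - flux a| ≤ M * |b - a| := by
    intro a ha b hb
    have := Convex.norm_image_sub_le_of_norm_deriv_le
      (f := flux) (s := Set.Icc α β)
      (fun x _ => (hflux.differentiable one_ne_zero).differentiableAt)
      (fun x hx => by simpa [Real.norm_eq_abs] using hM x hx)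
      (convex_Icc α β) ha hb
    simpa [Real.norm_eq_abs] using this
  -- the basic objects
  set Gp : ℝ → ℝ := fun x => (lam * x + flux x) / 2 with hGpdef
  set Gm : ℝ → ℝ := fun x => (lam * x - flux x) / 2 with hGmdef
  set Fp : ℕ → ℤ → ℝ := fun n j => (lam * u n j + v n j) / 2 with hFpdef
  set Fm : ℕ → ℤ → ℝ := fun n j => (lam * u n j - v n j) / 2 with hFmdef
  set Hp : ℕ → ℤ → ℝ := fun n j => (1 - s) * Fp n j + s * Gp (u n j) with hHpdef
  set H : ℕ → ℤ → ℝ := fun n j => (1 - s) * Fm n j + s * Gm (u n j) with hHdef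
  have hGpGm : ∀ x, Gp x + Gm x = lam * x := by intro x; simp [hGpdef, hGmdef]; ring
  have hFpFm : ∀ n j, Fp n j + Fm n j = lam * u n j := by
    intro n j; simp [hFpdef, hFmdef]; ring
  have hHsum : ∀ n j, Hp n j + H n j = lam * u n j := by
    intro n j
    have h1 := hFpFm n j
    have h2 := hGpGm (u n j)
    simp only [hHpdef, hHdef]
    nlinarith [h1, h2]
  -- monotonicity of the Maxwellian halves
  have hGpmono : ∀ a ∈ Set.Icc α β, ∀ b ∈ Set.Icc α β, a ≤ b → Gp a ≤ Gp b := by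
    intro a ha b hb hab
    have h := hLip a ha b hb
    rw [abs_of_nonneg (by linarith : (0:ℝ) ≤ b - a)] at h
    have h' := abs_le.mp h
    simp only [hGpdef]
    nlinarith [h'.1, h'.2]
  have hGmmono : ∀ a ∈ Set.Icc α β, ∀ b ∈ Set.Icc α β, a ≤ b → Gm a ≤ Gm b := by
    intro a ha b hb hab
    have h := hLip a ha b hb
    rw [abs_of_nonneg (by linarith : (0:ℝ) ≤ b - a)] at h
    have h' := abs_le.mp h
    simp only [hGmdef]
    nlinarith [h'.1, h'.2]
  -- combined difference identity
  have hG1 : ∀ a ∈ Set.Icc α β, ∀ b ∈ Set.Icc α β,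
      |Gp b - Gp a| + |Gm b - Gm a| = lam * |b - a| := by
    have key : ∀ a ∈ Set.Icc α β, ∀ b ∈ Set.Icc α β, a ≤ b →
        |Gp b - Gp a| + |Gm b - Gm a| = lam * |b - a| := by
      intro a ha b hb hab
      rw [abs_of_nonneg (sub_nonneg.mpr (hGpmono a ha b hb hab)),
        abs_of_nonneg (sub_nonneg.mpr (hGmmono a ha b hb hab)),
        abs_of_nonneg (by linarith : (0:ℝ) ≤ b - a)]
      simp only [hGpdef, hGmdef]
      ring
    intro a ha b hb
    rcases le_total a b with hab | hab
    · exact key a ha b hb hab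
    · rw [abs_sub_comm (Gp b), abs_sub_comm (Gm b), abs_sub_comm b]
      exact key b hb a ha hab
  have hGpLip : ∀ a ∈ Set.Icc α β, ∀ b ∈ Set.Icc α β, |Gp b - Gp a| ≤ lam * |b - a| := by
    intro a ha b hb
    have := hG1 a ha b hb
    have := abs_nonneg (Gm b - Gm a)
    linarith
  have hGmLip : ∀ a ∈ Set.Icc α β, ∀ b ∈ Set.Icc α β, |Gm b - Gm a| ≤ lam * |b - a| := by
    intro a ha b hb
    have := hG1 a ha b hb
    have := abs_nonneg (Gp b - Gp a)
    linarith
  -- recurrences in kinetic variables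
  have recFp : ∀ n j, Fp (n + 1) j = Hp n (j - 1) := by
    intro n j
    simp only [hFpdef, hHpdef, hGpdef]
    rw [hrecu n j, hrecv n j]
    field_simp
    ring
  have recFm : ∀ n j, Fm (n + 1) j = H n (j + 1) := by
    intro n j
    simp only [hFmdef, hHdef, hGmdef]
    rw [hrecu n j, hrecv n j]
    field_simp
    ring
  -- initial data is at equilibrium
  have hF0p : ∀ j, Fp 0 j = Gp (u 0 j) := by
    intro j; simp only [hFpdef, hGpdef, hinitv j]
  have hF0m : ∀ j, Fm 0 j = Gm (u 0 j) := by
    intro j; simp only [hFmdef, hGmdef, hinitv j]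
  -- membership helpers
  have hmemGp : ∀ x ∈ Set.Icc α β, Gp x ∈ Set.Icc (Gp α) (Gp β) := by
    intro x hx
    exact ⟨hGpmono α ⟨le_refl _, hαβ⟩ x hx hx.1, hGpmono x hx β ⟨hαβ, le_refl _⟩ hx.2⟩
  have hmemGm : ∀ x ∈ Set.Icc α β, Gm x ∈ Set.Icc (Gm α) (Gm β) := by
    intro x hx
    exact ⟨hGmmono α ⟨le_refl _, hαβ⟩ x hx hx.1, hGmmono x hx β ⟨hαβ, le_refl _⟩ hx.2⟩
  have hFromF : ∀ n, (∀ j, Fp n j ∈ Set.Icc (Gp α) (Gp β)) →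
      (∀ j, Fm n j ∈ Set.Icc (Gm α) (Gm β)) → ∀ j, u n j ∈ Set.Icc α β := by
    intro n h1 h2 j
    have e := hFpFm n j
    have hA := hGpGm α
    have hB := hGpGm β
    obtain ⟨h1a, h1b⟩ := h1 j
    obtain ⟨h2a, h2b⟩ := h2 j
    constructor
    · have : lam * α ≤ lam * u n j := by linarith
      exact le_of_mul_le_mul_left this hlampos
    · have : lam * u n j ≤ lam * β := by linarith
      exact le_of_mul_le_mul_left this hlampos
  -- invariant domain
  have hinv : ∀ n, (∀ j, Fp n j ∈ Set.Icc (Gp α) (Gp β)) ∧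
      (∀ j, Fm n j ∈ Set.Icc (Gm α) (Gm β)) := by
    intro n
    induction n with
    | zero =>
      constructor
      · intro j; rw [hF0p j]; exact hmemGp _ (hinit j)
      · intro j; rw [hF0m j]; exact hmemGm _ (hinit j)
    | succ n ih =>
      have humem : ∀ j, u n j ∈ Set.Icc α β := hFromF n ih.1 ih.2
      constructor
      · intro j
        rw [recFp n j]
        simp only [hHpdef]
        exact s8_convex_mem hs0 hs1 (ih.1 (j - 1)) (hmemGp _ (humem (j - 1)))
      · intro j
        rw [recFm n j]
        simp only [hHdef]
        exact s8_convex_mem hs0 hs1 (ih.2 (j + 1)) (hmemGm _ (humem (j + 1)))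
  have humem : ∀ n j, u n j ∈ Set.Icc α β := fun n => hFromF n (hinv n).1 (hinv n).2
  -- total variation functional
  set Ksum : ℕ → ENNReal := fun n => ∑' j : ℤ,
      (ENNReal.ofReal |Fp n (j + 1) - Fp n j| + ENNReal.ofReal |Fm n (j + 1) - Fm n j|)
    with hKdef
  -- pointwise relaxation contraction
  have hhalfpt : ∀ n (j : ℤ), |Hp n (j + 1) - Hp n j| + |H n (j + 1) - H n j| ≤
      |Fp n (j + 1) - Fp n j| + |Fm n (j + 1) - Fm n j| := by
    intro n j
    have hg : |Gp (u n (j + 1)) - Gp (u n j)| + |Gm (u n (j + 1)) - Gm (u n j)| ≤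
        |(Fp n (j + 1) - Fp n j) + (Fm n (j + 1) - Fm n j)| := by
      have e : (Fp n (j + 1) - Fp n j) + (Fm n (j + 1) - Fm n j)
          = lam * (u n (j + 1) - u n j) := by
        have := hFpFm n (j + 1); have := hFpFm n j; linarith
      rw [e, abs_mul, abs_of_pos hlampos]
      exact le_of_eq (hG1 _ (humem n j) _ (humem n (j + 1)))
    have e1 : Hp n (j + 1) - Hp n j
        = (1 - s) * (Fp n (j + 1) - Fp n j) + s * (Gp (u n (j + 1)) - Gp (u n j)) := by
      simp only [hHpdef]; ring
    have e2 : H n (j + 1) - H n j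
        = (1 - s) * (Fm n (j + 1) - Fm n j) + s * (Gm (u n (j + 1)) - Gm (u n j)) := by
      simp only [hHdef]; ring
    rw [e1, e2]
    exact s8_abs_comb hs0 hs1 hg
  -- one step of the TV estimate
  have hK_step : ∀ n, Ksum (n + 1) ≤ Ksum n := by
    intro n
    have e : ∀ j : ℤ,
        (ENNReal.ofReal |Fp (n+1) (j + 1) - Fp (n+1) j| +
          ENNReal.ofReal |Fm (n+1) (j + 1) - Fm (n+1) j|)
        = ((fun k => ENNReal.ofReal |Hp n (k + 1) - Hp n k|) (j + (-1)) +
            (fun k => ENNReal.ofReal |H n (k + 1) - H n k|) (j + 1)) := by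
      intro j
      beta_reduce
      rw [recFp n (j + 1), recFp n j, recFm n (j + 1), recFm n j]
      have e1 : (j : ℤ) + 1 - 1 = j + (-1) + 1 := by ring
      have e2 : (j : ℤ) - 1 = j + (-1) := by ring
      rw [e1, e2]
    calc Ksum (n + 1)
        = (∑' j : ℤ, (fun k => ENNReal.ofReal |Hp n (k + 1) - Hp n k|) (j + (-1))) +
          ∑' j : ℤ, (fun k => ENNReal.ofReal |H n (k + 1) - H n k|) (j + 1) := by
          rw [hKdef]
          simp only []
          rw [← ENNReal.tsum_add]
          exact tsum_congr e
      _ = (∑' j : ℤ, ENNReal.ofReal |Hp n (j + 1) - Hp n j|) +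
          ∑' j : ℤ, ENNReal.ofReal |H n (j + 1) - H n j| := by
          exact congrArg₂ (· + ·)
            (s8_tsum_shift (fun k => ENNReal.ofReal |Hp n (k + 1) - Hp n k|) (-1))
            (s8_tsum_shift (fun k => ENNReal.ofReal |H n (k + 1) - H n k|) 1)
      _ = ∑' j : ℤ, (ENNReal.ofReal |Hp n (j + 1) - Hp n j| +
            ENNReal.ofReal |H n (j + 1) - H n j|) := (ENNReal.tsum_add).symm
      _ ≤ Ksum n := by
          apply ENNReal.tsum_le_tsum
          intro j
          rw [← ENNReal.ofReal_add (abs_nonneg _) (abs_nonneg _),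
            ← ENNReal.ofReal_add (abs_nonneg _) (abs_nonneg _)]
          exact ENNReal.ofReal_le_ofReal (hhalfpt n j)
  -- initial TV
  have hK0 : Ksum 0 ≤ ENNReal.ofReal lam * tvSeq (u 0) := by
    have e : ∀ j : ℤ,
        ENNReal.ofReal |Fp 0 (j + 1) - Fp 0 j| + ENNReal.ofReal |Fm 0 (j + 1) - Fm 0 j|
        = ENNReal.ofReal lam * ENNReal.ofReal |u 0 (j + 1) - u 0 j| := by
      intro j
      rw [hF0p, hF0p, hF0m, hF0m,
        ← ENNReal.ofReal_add (abs_nonneg _) (abs_nonneg _),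
        hG1 _ (hinit j) _ (hinit (j + 1)),
        ENNReal.ofReal_mul hlam0]
    rw [hKdef]
    simp only []
    rw [tsum_congr e, ENNReal.tsum_mul_left]
    exact le_of_eq rfl
  have hK : ∀ n, Ksum n ≤ ENNReal.ofReal lam * tvSeq (u 0) := by
    intro n
    induction n with
    | zero => exact hK0
    | succ n ih => exact le_trans (hK_step n) ih
  -- the equilibrium gap functional
  set Dsum : ℕ → ENNReal := fun n => ∑' j : ℤ, ENNReal.ofReal |Gp (u n j) - Fp n j|
    with hDdef
  have hD0 : Dsum 0 = 0 := by
    rw [hDdef]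
    simp only []
    have : ∀ j : ℤ, ENNReal.ofReal |Gp (u 0 j) - Fp 0 j| = 0 := by
      intro j; rw [hF0p j]; simp
    rw [tsum_congr this]; simp
  -- the pointwise gap estimate
  have hDpt : ∀ n (j : ℤ), 2 * |Gp (u (n+1) j) - Fp (n+1) j| ≤
      (1 - s) * |Gp (u n (j - 1)) - Fp n (j - 1)| +
      (1 - s) * |Gp (u n (j + 1)) - Fp n (j + 1)| +
      (|H n (j + 1) - H n j| + |H n j - H n (j - 1)|) +
      (|Hp n (j + 1) - Hp n j| + |Hp n j - Hp n (j - 1)|) := by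
    intro n j
    -- first estimate via Gp
    have e1 : Gp (u (n+1) j) - Fp (n+1) j
        = (Gp (u (n+1) j) - Gp (u n (j - 1)))
          + (1 - s) * (Gp (u n (j - 1)) - Fp n (j - 1)) := by
      rw [recFp n j]
      simp only [hHpdef]
      ring
    have b1 : |Gp (u (n+1) j) - Gp (u n (j - 1))| ≤ lam * |u (n+1) j - u n (j - 1)| :=
      hGpLip _ (humem n (j - 1)) _ (humem (n+1) j)
    have c1 : lam * (u (n+1) j - u n (j - 1)) = H n (j + 1) - H n (j - 1) := by
      have h1 := hFpFm (n+1) j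
      have h2 := hHsum n (j - 1)
      rw [recFp n j, recFm n j] at h1
      linarith
    have c1' : lam * |u (n+1) j - u n (j - 1)| = |H n (j + 1) - H n (j - 1)| := by
      rw [← c1, abs_mul, abs_of_pos hlampos]
    have t1 : |H n (j + 1) - H n (j - 1)| ≤ |H n (j + 1) - H n j| + |H n j - H n (j - 1)| :=
      abs_sub_le _ _ _
    have bound1 : |Gp (u (n+1) j) - Fp (n+1) j| ≤
        (1 - s) * |Gp (u n (j - 1)) - Fp n (j - 1)| +
        (|H n (j + 1) - H n j| + |H n j - H n (j - 1)|) := by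
      calc |Gp (u (n+1) j) - Fp (n+1) j|
          ≤ |Gp (u (n+1) j) - Gp (u n (j - 1))|
            + |(1 - s) * (Gp (u n (j - 1)) - Fp n (j - 1))| := by
            rw [e1]; exact abs_add_le _ _
        _ ≤ lam * |u (n+1) j - u n (j - 1)|
            + (1 - s) * |Gp (u n (j - 1)) - Fp n (j - 1)| := by
            rw [abs_mul, abs_of_nonneg hs1']
            exact add_le_add_left b1 _
        _ ≤ (1 - s) * |Gp (u n (j - 1)) - Fp n (j - 1)| +
            (|H n (j + 1) - H n j| + |H n j - H n (j - 1)|) := by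
            rw [c1']
            linarith
    -- second estimate via Gm
    have e2 : -(Gp (u (n+1) j) - Fp (n+1) j)
        = (Gm (u (n+1) j) - Gm (u n (j + 1)))
          + (1 - s) * (-(Gp (u n (j + 1)) - Fp n (j + 1))) := by
      have hA := hGpGm (u (n+1) j)
      have hB := hFpFm (n+1) j
      have hC := hGpGm (u n (j + 1))
      have hD' := hFpFm n (j + 1)
      have hE : Fm (n+1) j = (1 - s) * Fm n (j + 1) + s * Gm (u n (j + 1)) := by
        rw [recFm n j]
      linear_combination hB - hA - hE + (1 - s) * (hC - hD')
    have b2 : |Gm (u (n+1) j) - Gm (u n (j + 1))| ≤ lam * |u (n+1) j - u n (j + 1)| :=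
      hGmLip _ (humem n (j + 1)) _ (humem (n+1) j)
    have c2 : lam * (u (n+1) j - u n (j + 1)) = Hp n (j - 1) - Hp n (j + 1) := by
      have h1 := hFpFm (n+1) j
      have h2 := hHsum n (j + 1)
      rw [recFp n j, recFm n j] at h1
      linarith
    have c2' : lam * |u (n+1) j - u n (j + 1)| = |Hp n (j - 1) - Hp n (j + 1)| := by
      rw [← c2, abs_mul, abs_of_pos hlampos]
    have t2 : |Hp n (j - 1) - Hp n (j + 1)| ≤ |Hp n (j + 1) - Hp n j| + |Hp n j - Hp n (j - 1)| := by
      rw [abs_sub_comm]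
      exact abs_sub_le _ _ _
    have bound2 : |Gp (u (n+1) j) - Fp (n+1) j| ≤
        (1 - s) * |Gp (u n (j + 1)) - Fp n (j + 1)| +
        (|Hp n (j + 1) - Hp n j| + |Hp n j - Hp n (j - 1)|) := by
      calc |Gp (u (n+1) j) - Fp (n+1) j|
          = |-(Gp (u (n+1) j) - Fp (n+1) j)| := (abs_neg _).symm
        _ ≤ |Gm (u (n+1) j) - Gm (u n (j + 1))|
            + |(1 - s) * (-(Gp (u n (j + 1)) - Fp n (j + 1)))| := by
            rw [e2]; exact abs_add_le _ _
        _ ≤ lam * |u (n+1) j - u n (j + 1)|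
            + (1 - s) * |Gp (u n (j + 1)) - Fp n (j + 1)| := by
            rw [abs_mul, abs_of_nonneg hs1', abs_neg]
            exact add_le_add_left b2 _
        _ ≤ (1 - s) * |Gp (u n (j + 1)) - Fp n (j + 1)| +
            (|Hp n (j + 1) - Hp n j| + |Hp n j - Hp n (j - 1)|) := by
            rw [c2']
            linarith
    linarith
  -- summed one-step gap estimate
  have two_of : ∀ x : ℝ, ENNReal.ofReal (2 * x) = 2 * ENNReal.ofReal x := by
    intro x
    rw [ENNReal.ofReal_mul (by norm_num : (0:ℝ) ≤ 2)]
    norm_num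
  have hDstep : ∀ n, 2 * Dsum (n + 1) ≤
      2 * (ENNReal.ofReal (1 - s) * Dsum n + Ksum n) := by
    intro n
    set dd : ℤ → ENNReal := fun k => ENNReal.ofReal |Gp (u n k) - Fp n k| with hdd
    set gg : ℤ → ENNReal := fun k => ENNReal.ofReal |H n (k + 1) - H n k| with hgg
    set hh : ℤ → ENNReal := fun k => ENNReal.ofReal |Hp n (k + 1) - Hp n k| with hhh
    have pt : ∀ j : ℤ, 2 * ENNReal.ofReal |Gp (u (n+1) j) - Fp (n+1) j| ≤
        ENNReal.ofReal (1 - s) * dd (j + (-1)) + ENNReal.ofReal (1 - s) * dd (j + 1) +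
        (gg j + gg (j + (-1))) + (hh j + hh (j + (-1))) := by
      intro j
      simp only [hdd, hgg, hhh]
      beta_reduce
      have e2 : (j : ℤ) + (-1) + 1 = j := by ring
      have e3 : (j : ℤ) + (-1) = j - 1 := by ring
      rw [e2, e3]
      calc 2 * ENNReal.ofReal |Gp (u (n+1) j) - Fp (n+1) j|
          = ENNReal.ofReal (2 * |Gp (u (n+1) j) - Fp (n+1) j|) := (two_of _).symm
        _ ≤ ENNReal.ofReal ((1 - s) * |Gp (u n (j - 1)) - Fp n (j - 1)| +
              (1 - s) * |Gp (u n (j + 1)) - Fp n (j + 1)| +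
              (|H n (j + 1) - H n j| + |H n j - H n (j - 1)|) +
              (|Hp n (j + 1) - Hp n j| + |Hp n j - Hp n (j - 1)|)) :=
            ENNReal.ofReal_le_ofReal (hDpt n j)
        _ ≤ ENNReal.ofReal ((1 - s) * |Gp (u n (j - 1)) - Fp n (j - 1)|) +
              ENNReal.ofReal ((1 - s) * |Gp (u n (j + 1)) - Fp n (j + 1)|) +
              (ENNReal.ofReal |H n (j + 1) - H n j| + ENNReal.ofReal |H n j - H n (j - 1)|) +
              (ENNReal.ofReal |Hp n (j + 1) - Hp n j| +
                ENNReal.ofReal |Hp n j - Hp n (j - 1)|) := by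
            refine le_trans ENNReal.ofReal_add_le (add_le_add ?_ ENNReal.ofReal_add_le)
            refine le_trans ENNReal.ofReal_add_le (add_le_add ?_ ENNReal.ofReal_add_le)
            exact ENNReal.ofReal_add_le
        _ = ENNReal.ofReal (1 - s) * ENNReal.ofReal |Gp (u n (j - 1)) - Fp n (j - 1)| +
              ENNReal.ofReal (1 - s) * ENNReal.ofReal |Gp (u n (j + 1)) - Fp n (j + 1)| +
              (ENNReal.ofReal |H n (j + 1) - H n j| + ENNReal.ofReal |H n j - H n (j - 1)|) +
              (ENNReal.ofReal |Hp n (j + 1) - Hp n j| +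
                ENNReal.ofReal |Hp n j - Hp n (j - 1)|) := by
            rw [ENNReal.ofReal_mul hs1', ENNReal.ofReal_mul hs1']
    have hDn : Dsum n = ∑' k : ℤ, dd k := by rw [hDdef]
    have hsplit : (∑' j : ℤ,
        (ENNReal.ofReal (1 - s) * dd (j + (-1)) + ENNReal.ofReal (1 - s) * dd (j + 1) +
          (gg j + gg (j + (-1))) + (hh j + hh (j + (-1)))))
        = (∑' j : ℤ, ENNReal.ofReal (1 - s) * dd (j + (-1))) +
          (∑' j : ℤ, ENNReal.ofReal (1 - s) * dd (j + 1)) +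
          ((∑' j : ℤ, gg j) + (∑' j : ℤ, gg (j + (-1)))) +
          ((∑' j : ℤ, hh j) + (∑' j : ℤ, hh (j + (-1)))) := by
      rw [ENNReal.tsum_add, ENNReal.tsum_add, ENNReal.tsum_add, ENNReal.tsum_add,
        ENNReal.tsum_add]
    have hGH : (∑' j : ℤ, gg j) + (∑' j : ℤ, hh j) ≤ Ksum n := by
      rw [← ENNReal.tsum_add]
      apply ENNReal.tsum_le_tsum
      intro j
      simp only [hgg, hhh]
      rw [← ENNReal.ofReal_add (abs_nonneg _) (abs_nonneg _),
        ← ENNReal.ofReal_add (abs_nonneg _) (abs_nonneg _)]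
      refine ENNReal.ofReal_le_ofReal ?_
      have := hhalfpt n j
      linarith
    calc 2 * Dsum (n + 1)
        = ∑' j : ℤ, 2 * ENNReal.ofReal |Gp (u (n+1) j) - Fp (n+1) j| := by
          rw [hDdef, ENNReal.tsum_mul_left]
      _ ≤ ∑' j : ℤ,
          (ENNReal.ofReal (1 - s) * dd (j + (-1)) + ENNReal.ofReal (1 - s) * dd (j + 1) +
            (gg j + gg (j + (-1))) + (hh j + hh (j + (-1)))) := ENNReal.tsum_le_tsum pt
      _ = (ENNReal.ofReal (1 - s) * Dsum n) + (ENNReal.ofReal (1 - s) * Dsum n) +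
          ((∑' j : ℤ, gg j) + (∑' j : ℤ, gg j)) + ((∑' j : ℤ, hh j) + (∑' j : ℤ, hh j)) := by
          rw [hsplit, ENNReal.tsum_mul_left, ENNReal.tsum_mul_left,
            s8_tsum_shift dd (-1), s8_tsum_shift dd 1, s8_tsum_shift gg (-1),
            s8_tsum_shift hh (-1), hDn]
      _ = 2 * (ENNReal.ofReal (1 - s) * Dsum n + ((∑' j : ℤ, gg j) + (∑' j : ℤ, hh j))) := by
          ring
      _ ≤ 2 * (ENNReal.ofReal (1 - s) * Dsum n + Ksum n) := by
          exact mul_le_mul_right (add_le_add_right hGH _) 2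
  have hDstep' : ∀ n, Dsum (n + 1) ≤ ENNReal.ofReal (1 - s) * Dsum n + Ksum n := by
    intro n
    have h := hDstep n
    rwa [ENNReal.mul_le_mul_iff_right (by norm_num) (by norm_num)] at h
  -- the key uniform bound
  have hD : ∀ n, Dsum n ≤ ENNReal.ofReal (lam / s) * tvSeq (u 0) := by
    intro n
    induction n with
    | zero => rw [hD0]; exact zero_le
    | succ n ih =>
      calc Dsum (n + 1) ≤ ENNReal.ofReal (1 - s) * Dsum n + Ksum n := hDstep' n
        _ ≤ ENNReal.ofReal (1 - s) * (ENNReal.ofReal (lam / s) * tvSeq (u 0)) +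
            ENNReal.ofReal lam * tvSeq (u 0) := add_le_add (mul_le_mul_right ih _) (hK n)
        _ = (ENNReal.ofReal ((1 - s) * (lam / s)) + ENNReal.ofReal lam) * tvSeq (u 0) := by
            rw [ENNReal.ofReal_mul hs1', add_mul, mul_assoc]
        _ = ENNReal.ofReal ((1 - s) * (lam / s) + lam) * tvSeq (u 0) := by
            rw [ENNReal.ofReal_add (by positivity) hlam0]
        _ = ENNReal.ofReal (lam / s) * tvSeq (u 0) := by
            congr 1
            congr 1
            field_simp
            ring
  -- conclusion
  intro n
  have hgap : ∀ j : ℤ, ENNReal.ofReal |flux (u n j) - v n j|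
      = 2 * ENNReal.ofReal |Gp (u n j) - Fp n j| := by
    intro j
    have e : flux (u n j) - v n j = 2 * (Gp (u n j) - Fp n j) := by
      simp only [hGpdef, hFpdef]
      ring
    rw [e, abs_mul, abs_two, two_of]
  have hsum : (∑' j : ℤ, ENNReal.ofReal |flux (u n j) - v n j|) = 2 * Dsum n := by
    rw [tsum_congr hgap, ENNReal.tsum_mul_left, hDdef]
  calc ENNReal.ofReal dx * (∑' j : ℤ, ENNReal.ofReal |flux (u n j) - v n j|)
      = ENNReal.ofReal dx * (2 * Dsum n) := by rw [hsum]
    _ ≤ ENNReal.ofReal dx * (2 * (ENNReal.ofReal (lam / s) * tvSeq (u 0))) :=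
        mul_le_mul_right (mul_le_mul_right (hD n) 2) _
    _ = (ENNReal.ofReal dx * (2 * ENNReal.ofReal (lam / s))) * tvSeq (u 0) := by ring
    _ = ENNReal.ofReal (2 * lam * dx / s) * tvSeq (u 0) := by
        congr 1
        rw [← two_of, ← ENNReal.ofReal_mul hdx0]
        congr 1
        field_simp
end

section
/- In the D1Q2 scheme with equilibrium initial data f^±_j^0 = h^±(u_j^0), the first time increments satisfy |f⁺_j^1 − f⁺_j^0| ≤ |u_{j−1}^0 − u_j^0| and |f⁻_j^1 − f⁻_j^0| ≤ |u_{j+1}^0 − u_j^0| for every j ∈ ℤ, assuming λ ≥ M and u_j^0 ∈ [α,β] for all j. -/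
/-- First time increments of the D1Q2 scheme with equilibrium initial data. -/
theorem stmt9 (flux : ℝ → ℝ) (hflux : ContDiff ℝ 1 flux)
    (α β M lam s : ℝ) (hαβ : α ≤ β) (hlampos : 0 < lam)
    (hM : ∀ ξ ∈ Set.Icc α β, |deriv flux ξ| ≤ M) (hlam : M ≤ lam)
    (fp fm u : ℕ → ℤ → ℝ)
    (hu : ∀ n j, u n j = fp n j + fm n j)
    (hrecp : ∀ n j, fp (n + 1) j = (1 - s) * fp n (j - 1) + s * hp lam flux (u n (j - 1)))
    (hrecm : ∀ n j, fm (n + 1) j = (1 - s) * fm n (j + 1) + s * hm lam flux (u n (j + 1)))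
    (hinit : ∀ j, u 0 j ∈ Set.Icc α β)
    (hinitp : ∀ j, fp 0 j = hp lam flux (u 0 j))
    (hinitm : ∀ j, fm 0 j = hm lam flux (u 0 j)) :
    ∀ j : ℤ,
      |fp 1 j - fp 0 j| ≤ |u 0 (j - 1) - u 0 j| ∧
      |fm 1 j - fm 0 j| ≤ |u 0 (j + 1) - u 0 j| := by
  have hlip : ∀ x ∈ Set.Icc α β, ∀ y ∈ Set.Icc α β, |flux x - flux y| ≤ M * |x - y| := by
    intro x hx y hy
    have := (convex_Icc α β).norm_image_sub_le_of_norm_deriv_le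
      (f := flux) (fun z _ => hflux.differentiable one_ne_zero z)
      (fun z hz => by simpa using hM z hz) hy hx
    simpa [Real.norm_eq_abs] using this
  have key : ∀ x ∈ Set.Icc α β, ∀ y ∈ Set.Icc α β,
      |hp lam flux x - hp lam flux y| ≤ |x - y| ∧
      |hm lam flux x - hm lam flux y| ≤ |x - y| := by
    intro x hx y hy
    have hf := hlip x hx y hy
    have h2l : (0:ℝ) < 2 * lam := by linarith
    constructor
    · have e : hp lam flux x - hp lam flux y
          = (lam * (x - y) + (flux x - flux y)) / (2 * lam) := by unfold hp; ring
      rw [e, abs_div, abs_of_pos h2l, div_le_iff₀ h2l]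
      calc |lam * (x - y) + (flux x - flux y)|
          ≤ |lam * (x - y)| + |flux x - flux y| := abs_add_le _ _
        _ ≤ lam * |x - y| + M * |x - y| := by
            rw [abs_mul, abs_of_pos hlampos]; linarith
        _ ≤ |x - y| * (2 * lam) := by nlinarith [abs_nonneg (x - y)]
    · have e : hm lam flux x - hm lam flux y
          = (lam * (x - y) - (flux x - flux y)) / (2 * lam) := by unfold hm; ring
      rw [e, abs_div, abs_of_pos h2l, div_le_iff₀ h2l]
      calc |lam * (x - y) - (flux x - flux y)|
          ≤ |lam * (x - y)| + |flux x - flux y| := abs_sub _ _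
        _ ≤ lam * |x - y| + M * |x - y| := by
            rw [abs_mul, abs_of_pos hlampos]; linarith
        _ ≤ |x - y| * (2 * lam) := by nlinarith [abs_nonneg (x - y)]
  intro j
  have hp1 : fp 1 j = hp lam flux (u 0 (j - 1)) := by
    rw [hrecp 0 j, hinitp (j - 1)]; ring
  have hm1 : fm 1 j = hm lam flux (u 0 (j + 1)) := by
    rw [hrecm 0 j, hinitm (j + 1)]; ring
  constructor
  · rw [hp1, hinitp j]
    exact (key _ (hinit (j - 1)) _ (hinit j)).1
  · rw [hm1, hinitm j]
    exact (key _ (hinit (j + 1)) _ (hinit j)).2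
end

section
/- Let φ be C¹, |φ'| ≤ λ on [α,β], s ∈ (0,1]. For the D1Q2 scheme one has the identity for the equilibrium gap propagation: φ(u_j^{n+1}) − v_j^{n+1} = (1−s)(φ(u_j^n) − v_j^n) + (φ'(ζ_j) − λ)(f^{+,n+1/2}_{j−1} − f^{+,n+1/2}_j) + (φ'(ζ_j) + λ)(f^{−,n+1/2}_{j+1} − f^{−,n+1/2}_j) for some ζ_j between u_j^n and u_j^{n+1} (ζ_j ∈ (α,β)), and consequently |φ(u_j^{n+1}) − v_j^{n+1}| ≤ (1−s)|φ(u_j^n) − v_j^n| + 2λ(|f^{+,n+1/2}_{j−1} − f^{+,n+1/2}_j| + |f^{−,n+1/2}_{j+1} − f^{−,n+1/2}_j|). -/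
lemma mvt_uIcc (f : ℝ → ℝ) (hf : ContDiff ℝ 1 f) (a b : ℝ) :
    ∃ ζ ∈ Set.uIcc a b, f b - f a = deriv f ζ * (b - a) := by
  rcases lt_trichotomy a b with h | rfl | h
  · obtain ⟨ζ, hζ, hd⟩ := exists_hasDerivAt_eq_slope f (deriv f) h
      hf.continuous.continuousOn
      (fun x _ => ((hf.differentiable one_ne_zero) x).hasDerivAt)
    refine ⟨ζ, ?_, ?_⟩
    · exact Set.Icc_subset_uIcc (Set.Ioo_subset_Icc_self hζ)
    · rw [hd, div_mul_eq_mul_div, eq_div_iff (sub_ne_zero.2 h.ne')]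
  · exact ⟨a, Set.left_mem_uIcc, by ring⟩
  · obtain ⟨ζ, hζ, hd⟩ := exists_hasDerivAt_eq_slope f (deriv f) h
      hf.continuous.continuousOn
      (fun x _ => ((hf.differentiable one_ne_zero) x).hasDerivAt)
    refine ⟨ζ, ?_, ?_⟩
    · exact Set.Icc_subset_uIcc' (Set.Ioo_subset_Icc_self hζ)
    · rw [hd, div_mul_eq_mul_div, eq_div_iff (sub_ne_zero.2 h.ne')]; ring

/-- Propagation identity and estimate for the equilibrium gap of the D1Q2 scheme. -/
theorem stmt19 (flux : ℝ → ℝ) (hflux : ContDiff ℝ 1 flux)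
    (α β lam s : ℝ) (hαβ : α ≤ β) (hlampos : 0 < lam)
    (hs : s ∈ Set.Ioc (0 : ℝ) 1)
    (hφ' : ∀ ξ ∈ Set.Icc α β, |deriv flux ξ| ≤ lam)
    (fp fm fhp fhm u v : ℕ → ℤ → ℝ)
    (hu : ∀ n j, u n j = fp n j + fm n j)
    (hv : ∀ n j, v n j = lam * (fp n j - fm n j))
    (hfhp : ∀ n j, fhp n j = (1 - s) * fp n j + s * hp lam flux (u n j))
    (hfhm : ∀ n j, fhm n j = (1 - s) * fm n j + s * hm lam flux (u n j))
    (htrp : ∀ n j, fp (n + 1) j = fhp n (j - 1))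
    (htrm : ∀ n j, fm (n + 1) j = fhm n (j + 1))
    (hrange : ∀ n j, u n j ∈ Set.Icc α β) :
    ∀ n : ℕ, ∀ j : ℤ,
      (∃ ζ ∈ Set.uIcc (u n j) (u (n + 1) j),
        flux (u (n + 1) j) - v (n + 1) j
          = (1 - s) * (flux (u n j) - v n j)
            + (deriv flux ζ - lam) * (fhp n (j - 1) - fhp n j)
            + (deriv flux ζ + lam) * (fhm n (j + 1) - fhm n j)) ∧
      |flux (u (n + 1) j) - v (n + 1) j| ≤
        (1 - s) * |flux (u n j) - v n j|
          + 2 * lam * (|fhp n (j - 1) - fhp n j| + |fhm n (j + 1) - fhm n j|) := by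
  intro n j
  have hlam : lam ≠ 0 := ne_of_gt hlampos
  -- key algebraic facts
  have hsum : fhp n j + fhm n j = u n j := by
    rw [hfhp, hfhm, hp, hm, hu]; field_simp; ring
  have hdiff : lam * (fhp n j - fhm n j) = (1 - s) * v n j + s * flux (u n j) := by
    rw [hfhp, hfhm, hp, hm, hv]; field_simp; ring
  have hu1 : u (n + 1) j = fhp n (j - 1) + fhm n (j + 1) := by
    rw [hu, htrp, htrm]
  have hv1 : v (n + 1) j = lam * (fhp n (j - 1) - fhm n (j + 1)) := by
    rw [hv, htrp, htrm]
  obtain ⟨ζ, hζ, hmvt⟩ := mvt_uIcc flux hflux (u n j) (u (n + 1) j)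
  have hid : flux (u (n + 1) j) - v (n + 1) j
      = (1 - s) * (flux (u n j) - v n j)
        + (deriv flux ζ - lam) * (fhp n (j - 1) - fhp n j)
        + (deriv flux ζ + lam) * (fhm n (j + 1) - fhm n j) := by
    have h1 : flux (u (n + 1) j) = flux (u n j) + deriv flux ζ * (u (n + 1) j - u n j) := by
      linarith [hmvt]
    rw [h1, hv1]
    linear_combination (deriv flux ζ) * hu1 + (deriv flux ζ) * hsum - hdiff
  refine ⟨⟨ζ, hζ, hid⟩, ?_⟩
  -- bound part
  have hζab : ζ ∈ Set.Icc α β := by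
    have h1 := hrange n j
    have h2 := hrange (n + 1) j
    exact (Set.ordConnected_Icc).uIcc_subset h1 h2 hζ
  have hc := hφ' ζ hζab
  have hc1 : |deriv flux ζ - lam| ≤ 2 * lam := by
    rw [abs_le] at *; constructor <;> linarith [hc.1, hc.2]
  have hc2 : |deriv flux ζ + lam| ≤ 2 * lam := by
    rw [abs_le] at *; constructor <;> linarith [hc.1, hc.2]
  have hs1 : 0 ≤ 1 - s := by linarith [hs.2]
  calc |flux (u (n + 1) j) - v (n + 1) j|
      ≤ |(1 - s) * (flux (u n j) - v n j)|
        + |(deriv flux ζ - lam) * (fhp n (j - 1) - fhp n j)|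
        + |(deriv flux ζ + lam) * (fhm n (j + 1) - fhm n j)| := by
        rw [hid]; exact (abs_add_le _ _).trans (by gcongr; exact abs_add_le _ _)
    _ ≤ (1 - s) * |flux (u n j) - v n j|
        + 2 * lam * (|fhp n (j - 1) - fhp n j| + |fhm n (j + 1) - fhm n j|) := by
        rw [abs_mul, abs_mul, abs_mul, abs_of_nonneg hs1]
        have b1 : |deriv flux ζ - lam| * |fhp n (j - 1) - fhp n j|
            ≤ 2 * lam * |fhp n (j - 1) - fhp n j| := by
          exact mul_le_mul_of_nonneg_right hc1 (abs_nonneg _)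
        have b2 : |deriv flux ζ + lam| * |fhm n (j + 1) - fhm n j|
            ≤ 2 * lam * |fhm n (j + 1) - fhm n j| := by
          exact mul_le_mul_of_nonneg_right hc2 (abs_nonneg _)
        linarith
end
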